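/- arXiv:0908.3324 — 7 statements merged into one kernel-verified Lean document; each statement's English description precedes it below -/
import Mathlib

section
/- If G is a finite simple graph with an odd number of vertices, then the determinant of its adjacency matrix is an even integer. -/
open Finset

private lemma exists_fixed_of_odd {V : Type*} [Fintype V] [DecidableEq V]
    (h : Odd (Fintype.card V)) (σ : Equiv.Perm V) (hσ : σ⁻¹ = σ) : ∃ i, σ i = i := by
  by_contra hc
  push_neg at hc
  have h0 : ∑ _i : V, (1 : ZMod 2) = 0 :=
    Finset.sum_ninvolution (fun i => σ i)
      (fun _ => by decide)
      (fun i _ => hc i)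
      (fun i => Finset.mem_univ _)
      (fun i => by have this : σ⁻¹ (σ i) = i := σ.symm_apply_apply i; rwa [hσ] at this)
  rw [Finset.sum_const, Finset.card_univ, nsmul_eq_mul, mul_one] at h0
  obtain ⟨k, hk⟩ := h
  rw [hk] at h0
  push_cast at h0
  simp [show (2 : ZMod 2) = 0 from rfl] at h0

theorem det_even_of_odd_card {V : Type*} [Fintype V] [DecidableEq V]
    (G : SimpleGraph V) [DecidableRel G.Adj]
    (h : Odd (Fintype.card V)) :
    Even ((G.adjMatrix ℤ).det) := by
  rw [even_iff_two_dvd, show (2:ℤ) = ((2:ℕ):ℤ) from rfl, ← ZMod.intCast_zmod_eq_zero_iff_dvd]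
  rw [show (((G.adjMatrix ℤ).det : ℤ) : ZMod 2)
      = ((G.adjMatrix ℤ).map (Int.castRingHom (ZMod 2))).det from
    RingHom.map_det (Int.castRingHom (ZMod 2)) _]
  set B := (G.adjMatrix ℤ).map (Int.castRingHom (ZMod 2)) with hB
  have hsymm : ∀ i j, B i j = B j i := by
    intro i j
    simp [hB, Matrix.map_apply, SimpleGraph.adjMatrix_apply, G.adj_comm i j]
  have hdiag : ∀ i, B i i = 0 := by
    intro i
    simp [hB, Matrix.map_apply]
  have hprod : ∀ σ : Equiv.Perm V, (∏ i, B (σ⁻¹ i) i) = ∏ i, B (σ i) i := by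
    intro σ
    rw [← Equiv.prod_comp σ (fun i => B (σ⁻¹ i) i)]
    simp only [show ∀ i, σ⁻¹ (σ i) = i from σ.symm_apply_apply]
    exact Finset.prod_congr rfl fun i _ => hsymm i (σ i)
  rw [Matrix.det_apply]
  refine Finset.sum_ninvolution (fun σ => σ⁻¹) ?_ ?_ (fun σ => Finset.mem_univ _)
    (fun σ => inv_inv σ)
  · intro σ
    rw [Equiv.Perm.sign_inv, hprod, ← smul_add, CharTwo.add_self_eq_zero, smul_zero]
  · intro σ hne heq
    apply hne
    obtain ⟨i, hi⟩ := exists_fixed_of_odd h σ heq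
    rw [show (∏ j, B (σ j) j) = 0 from Finset.prod_eq_zero (Finset.mem_univ i)
      (by rw [hi]; exact hdiag i), smul_zero]
end

section
/- For every natural number n ≥ 1, there exists a simple graph G on n vertices with det(G) < 0 if and only if n ≠ 1 and n ≠ 3. -/
open Matrix

namespace DetNegAux

lemma adjMatrix_inst_irrel {V : Type*} (G : SimpleGraph V)
    (i1 i2 : DecidableRel G.Adj) :
    @SimpleGraph.adjMatrix ℤ V G i1 _ _ = @SimpleGraph.adjMatrix ℤ V G i2 _ _ := by
  congr!

lemma det_sum {α β : Type*} [Fintype α] [Fintype β] [DecidableEq α] [DecidableEq β]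
    (G : SimpleGraph α) (H : SimpleGraph β) [DecidableRel G.Adj] [DecidableRel H.Adj]
    [DecidableRel (G.sum H).Adj] :
    ((G.sum H).adjMatrix ℤ).det = (G.adjMatrix ℤ).det * (H.adjMatrix ℤ).det := by
  have h : (G.sum H).adjMatrix ℤ =
      Matrix.fromBlocks (G.adjMatrix ℤ) 0 0 (H.adjMatrix ℤ) := by
    ext i j
    cases i <;> cases j <;> simp [Matrix.fromBlocks, SimpleGraph.adjMatrix_apply]
  rw [h, Matrix.det_fromBlocks_zero₁₂]

lemma det_comap {α β : Type*} [Fintype α] [Fintype β] [DecidableEq α] [DecidableEq β]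
    (G : SimpleGraph β) (e : α ≃ β) [DecidableRel G.Adj] [DecidableRel (G.comap e).Adj] :
    ((G.comap e).adjMatrix ℤ).det = (G.adjMatrix ℤ).det := by
  have h : (G.comap e).adjMatrix ℤ = (G.adjMatrix ℤ).submatrix e e := by
    ext i j; simp
  rw [h, Matrix.det_submatrix_equiv_self]

lemma det_top2 : (((⊤ : SimpleGraph (Fin 2)).adjMatrix ℤ)).det = -1 := by decide
lemma det_top3 : (((⊤ : SimpleGraph (Fin 3)).adjMatrix ℤ)).det = 2 := by decide
lemma det_top4 : (((⊤ : SimpleGraph (Fin 4)).adjMatrix ℤ)).det = -3 := by decide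

open scoped Classical

/-- the existence predicate, elaborated classically exactly like the target -/
def P (n : ℕ) : Prop := ∃ G : SimpleGraph (Fin n), (G.adjMatrix ℤ).det < 0

lemma P_of_det {n : ℕ} (G : SimpleGraph (Fin n)) (inst : DecidableRel G.Adj)
    (h : (@SimpleGraph.adjMatrix ℤ _ G inst _ _).det < 0) : P n := by
  refine ⟨G, ?_⟩
  rwa [adjMatrix_inst_irrel G _ inst]

lemma det_nonneg_three (G : SimpleGraph (Fin 3)) (inst : DecidableRel G.Adj) :
    0 ≤ (@SimpleGraph.adjMatrix ℤ _ G inst _ _).det := by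
  rw [Matrix.det_fin_three]
  simp only [SimpleGraph.adjMatrix_apply]
  by_cases h1 : G.Adj 0 1 <;> by_cases h2 : G.Adj 0 2 <;> by_cases h3 : G.Adj 1 2 <;>
    simp [h1, h2, h3, G.adj_comm 1 0, G.adj_comm 2 0, G.adj_comm 2 1, G.irrefl]

lemma P2 : P 2 := P_of_det ⊤ inferInstance (by rw [det_top2]; norm_num)

lemma P4 : P 4 := P_of_det ⊤ inferInstance (by rw [det_top4]; norm_num)

lemma P_step {m : ℕ} (h : P m) : P (m + 3) := by
  obtain ⟨G, hG⟩ := h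
  refine ⟨SimpleGraph.comap (finSumFinEquiv (m := m) (n := 3)).symm
    (G.sum (⊤ : SimpleGraph (Fin 3))), ?_⟩
  rw [det_comap, det_sum]
  have h3 : ((⊤ : SimpleGraph (Fin 3)).adjMatrix ℤ).det = 2 := by
    rw [adjMatrix_inst_irrel _ _ (inferInstance : DecidableRel (⊤ : SimpleGraph (Fin 3)).Adj)]
    exact det_top3
  rw [h3]
  have hG' : (G.adjMatrix ℤ).det < 0 := hG
  linarith

lemma P6 : P 6 := by
  refine ⟨SimpleGraph.comap (finSumFinEquiv (m := 2) (n := 4)).symm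
    ((⊤ : SimpleGraph (Fin 2)).sum (SimpleGraph.comap (finSumFinEquiv (m := 2) (n := 2)).symm
      ((⊤ : SimpleGraph (Fin 2)).sum (⊤ : SimpleGraph (Fin 2))))), ?_⟩
  rw [det_comap, det_sum, det_comap, det_sum]
  have h2 : ((⊤ : SimpleGraph (Fin 2)).adjMatrix ℤ).det = -1 := det_top2
  rw [h2]
  norm_num

end DetNegAux

open scoped Classical in
theorem exists_graph_det_neg_iff (n : ℕ) (hn : 1 ≤ n) :
    (∃ G : SimpleGraph (Fin n), (G.adjMatrix ℤ).det < 0) ↔ (n ≠ 1 ∧ n ≠ 3) := by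
  constructor
  · rintro ⟨G, hG⟩
    constructor
    · rintro rfl
      rw [Matrix.det_fin_one] at hG
      simp at hG
    · rintro rfl
      exact absurd hG (not_lt.2 (DetNegAux.det_nonneg_three G _))
  · rintro ⟨h1, h3⟩
    have h2 : 2 ≤ n := by omega
    clear hn h1
    -- strong induction
    have key : ∀ m, 2 ≤ m → m ≠ 3 → DetNegAux.P m := by
      intro m
      induction m using Nat.strong_induction_on with
      | _ m ih =>
        intro hm hm3
        rcases Nat.lt_or_ge m 7 with hlt | hge
        · interval_cases m
          · exact DetNegAux.P2
          · omega
          · exact DetNegAux.P4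
          · exact DetNegAux.P_step DetNegAux.P2
          · exact DetNegAux.P6
        · have : m - 3 + 3 = m := by omega
          rw [← this]
          exact DetNegAux.P_step (ih (m - 3) (by omega) (by omega) (by omega))
    exact key n h2 h3
end

section
/- Let G be a finite simple graph with n ≥ 2 vertices and m edges. Then, as real numbers, |det(G)| ≤ (2m/n)^n · (1 - (2m - n)/(n(n-1)))^(n-1). -/
open Matrix Finset

section RyserAux

lemma ryser_aux_prod_le {ι : Type*} (s : Finset ι) (x a : ι → ℝ)
    (hx : ∀ i ∈ s, 0 ≤ x i) (ha : ∀ i ∈ s, 0 < a i)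
    (h : ∑ i ∈ s, x i / a i ≤ s.card) :
    ∏ i ∈ s, x i ≤ ∏ i ∈ s, a i := by
  calc ∏ i ∈ s, x i ≤ ∏ i ∈ s, (a i * Real.exp (x i / a i - 1)) := by
        refine Finset.prod_le_prod hx fun i hi => ?_
        have h1 := Real.add_one_le_exp (x i / a i - 1)
        have h2 := (ha i hi)
        rw [sub_add_cancel] at h1
        calc x i = a i * (x i / a i) := by field_simp
          _ ≤ a i * Real.exp (x i / a i - 1) := mul_le_mul_of_nonneg_left h1 h2.le
    _ = (∏ i ∈ s, a i) * Real.exp (∑ i ∈ s, (x i / a i - 1)) := by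
        rw [Finset.prod_mul_distrib, Real.exp_sum]
    _ ≤ (∏ i ∈ s, a i) * 1 := by
        refine mul_le_mul_of_nonneg_left ?_ (Finset.prod_nonneg fun i hi => (ha i hi).le)
        rw [Real.exp_le_one_iff, Finset.sum_sub_distrib]
        simp only [Finset.sum_const, nsmul_eq_mul, mul_one]
        linarith
    _ = ∏ i ∈ s, a i := mul_one _

variable {V : Type*} [Fintype V] [DecidableEq V] (G : SimpleGraph V) [DecidableRel G.Adj]

omit [Fintype V] [DecidableEq V] in
lemma ryser_hermA : (G.adjMatrix ℝ).IsHermitian := by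
  ext i j
  simp [Matrix.conjTranspose_apply, SimpleGraph.adjMatrix_apply, SimpleGraph.adj_comm]

lemma ryser_det_cast : (((G.adjMatrix ℤ).det : ℤ) : ℝ) = (G.adjMatrix ℝ).det := by
  rw [show (((G.adjMatrix ℤ).det : ℤ) : ℝ) = (Int.castRingHom ℝ) (G.adjMatrix ℤ).det from rfl,
    RingHom.map_det (Int.castRingHom ℝ)]
  congr 1
  ext i j
  simp [SimpleGraph.adjMatrix_apply, apply_ite]

lemma ryser_sum_eig_sq :
    ∑ i, ((ryser_hermA G).eigenvalues i)^2 = 2 * G.edgeFinset.card := by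
  have hA := ryser_hermA G
  set A := G.adjMatrix ℝ with hAdef
  set U := (hA.eigenvectorUnitary : Matrix V V ℝ) with hU
  set D : Matrix V V ℝ := diagonal (RCLike.ofReal ∘ hA.eigenvalues) with hD
  have hsp : A = U * D * star U := hA.spectral_theorem
  have hUU : star U * U = 1 := Unitary.coe_star_mul_self _
  have h1 : A * A = U * (D * D) * star U := by
    calc A * A = (U * D * star U) * (U * D * star U) := by rw [← hsp]
      _ = U * (D * ((star U * U) * D)) * star U := by noncomm_ring
      _ = U * (D * D) * star U := by rw [hUU, one_mul]
  have h2 : trace (A * A) = ∑ i, (hA.eigenvalues i)^2 := by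
    rw [h1, trace_mul_cycle, ← Matrix.mul_assoc, hUU, Matrix.one_mul, hD,
      diagonal_mul_diagonal, trace_diagonal]
    simp [sq]
  have h3 : trace (A * A) = ∑ i, (G.degree i : ℝ) := by
    rw [trace]
    congr 1; ext i
    rw [diag_apply, SimpleGraph.adjMatrix_mul_self_apply_self]
  have h4 : ∑ i, (G.degree i : ℝ) = ((2 * G.edgeFinset.card : ℕ) : ℝ) := by
    rw [← SimpleGraph.sum_degrees_eq_twice_card_edges]
    push_cast
    rfl
  rw [← h2, h3, h4]
  push_cast
  ring

lemma ryser_rayleigh : ∃ y : V → ℝ, ∑ i, (y i)^2 = Fintype.card V ∧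
    ∑ i, (ryser_hermA G).eigenvalues i * (y i)^2 = 2 * G.edgeFinset.card := by
  have hA := ryser_hermA G
  set A := G.adjMatrix ℝ with hAdef
  set U := (hA.eigenvectorUnitary : Matrix V V ℝ) with hU
  set D : Matrix V V ℝ := diagonal (RCLike.ofReal ∘ hA.eigenvalues) with hD
  have hsp : A = U * D * star U := hA.spectral_theorem
  have hUstar : star U = Uᵀ := by
    rw [Matrix.star_eq_conjTranspose, Matrix.conjTranspose_eq_transpose_of_trivial]
  have hUUt : U * Uᵀ = 1 := by rw [← hUstar]; exact Unitary.coe_mul_star_self _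
  set x : V → ℝ := fun _ => 1 with hx
  refine ⟨x ᵥ* U, ?_, ?_⟩
  · have : (x ᵥ* U) ⬝ᵥ (Uᵀ *ᵥ x) = x ⬝ᵥ x := by
      rw [Matrix.dotProduct_mulVec, Matrix.vecMul_vecMul, hUUt, Matrix.vecMul_one]
    rw [Matrix.mulVec_transpose] at this
    simpa [dotProduct, sq, hx] using this
  · have key : x ⬝ᵥ (A *ᵥ x) = (x ᵥ* U) ⬝ᵥ (D *ᵥ (Uᵀ *ᵥ x)) := by
      rw [hsp, hUstar, ← Matrix.mulVec_mulVec, ← Matrix.mulVec_mulVec,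
        Matrix.dotProduct_mulVec]
    rw [Matrix.mulVec_transpose] at key
    have hleft : x ⬝ᵥ (A *ᵥ x) = 2 * G.edgeFinset.card := by
      have h1 : ∀ v, (A *ᵥ x) v = (G.degree v : ℝ) := by
        intro v
        rw [hAdef, SimpleGraph.adjMatrix_mulVec_apply, SimpleGraph.degree]
        rw [Finset.sum_const, Finset.card_eq_sum_ones]
        push_cast
        simp
      have : x ⬝ᵥ (A *ᵥ x) = ∑ v, (G.degree v : ℝ) := by
        simp only [dotProduct, h1]
        simp [hx]
      rw [this, show ∑ v, (G.degree v : ℝ) = ((∑ v, G.degree v : ℕ) : ℝ) by push_cast; rfl,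
        SimpleGraph.sum_degrees_eq_twice_card_edges]
      push_cast; ring
    have hright : (x ᵥ* U) ⬝ᵥ (D *ᵥ (x ᵥ* U)) = ∑ i, hA.eigenvalues i * ((x ᵥ* U) i)^2 := by
      rw [hD]
      simp [dotProduct, Matrix.mulVec_diagonal, sq]
      congr 1; ext i; ring
    rw [← hright, ← key, hleft]


lemma ryser_scalar (N s t : ℝ) (hN : 2 ≤ N) (hsN : N ≤ s) (hsU : s ≤ N*(N-1))
    (hts : s^2 ≤ t * N^2) (ht2 : t ≤ s) :
    t / (s/N)^2 + (s - t) / (s * (N^2 - s) / (N^2 * (N-1))) ≤ N := by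
  have hNpos : (0:ℝ) < N := by linarith
  have hspos : 0 < s := by linarith
  have hN1 : (0:ℝ) < N - 1 := by linarith
  have hNNs : 0 < N^2 - s := by nlinarith
  have h1 : t / (s/N)^2 = t * N^2 / s^2 := by
    field_simp
  have h2 : (s - t) / (s * (N^2 - s) / (N^2 * (N-1))) = (s-t) * (N^2*(N-1)) / (s * (N^2 - s)) := by
    field_simp
  rw [h1, h2, div_add_div _ _ (by positivity) (by positivity), div_le_iff₀ (by positivity)]
  nlinarith [mul_nonneg (mul_nonneg (mul_nonneg hNpos.le hspos.le)
    (sub_nonneg.2 hts)) (sub_nonneg.2 hsN)]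

end RyserAux

theorem abs_det_le_ryser_bound {V : Type*} [Fintype V] [DecidableEq V]
    (G : SimpleGraph V) [DecidableRel G.Adj]
    (n m : ℕ) (hn : n = Fintype.card V) (hm : m = G.edgeFinset.card) (h2 : 2 ≤ n) :
    |(((G.adjMatrix ℤ).det : ℤ) : ℝ)| ≤
      (2 * (m : ℝ) / n) ^ n * (1 - (2 * (m : ℝ) - n) / (n * (n - 1))) ^ (n - 1) := by
  have hNpos : (0:ℝ) < n := by positivity
  have hN2 : (2:ℝ) ≤ (n:ℝ) := by exact_mod_cast h2
  have hN1 : (0:ℝ) < (n:ℝ) - 1 := by linarith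
  -- edge count bound : 2*m ≤ n*(n-1)
  have hedge : 2 * m ≤ n * (n - 1) := by
    have h1 : m ≤ (Fintype.card V).choose 2 := hm ▸ G.card_edgeFinset_le_card_choose_two
    have he : Even (Fintype.card V * (Fintype.card V - 1)) := by
      rcases Nat.even_or_odd (Fintype.card V) with h | h
      · exact h.mul_right _
      · exact ((Nat.Odd.sub_odd h odd_one)).mul_left _
    obtain ⟨k, hk⟩ := he
    have h2' : (Fintype.card V).choose 2 = k := by
      rw [Nat.choose_two_right]
      omega
    rw [hn]
    omega
  have hedgeR : 2 * (m:ℝ) ≤ (n:ℝ) * ((n:ℝ) - 1) := by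
    have : ((2 * m : ℕ) : ℝ) ≤ ((n * (n-1) : ℕ) : ℝ) := by exact_mod_cast hedge
    push_cast at this
    have hc : ((n - 1 : ℕ) : ℝ) = (n:ℝ) - 1 := by
      have : 1 ≤ n := by omega
      push_cast [this]
      ring
    rw [hc] at this
    linarith
  -- rewrite the second factor
  have hfact : 1 - (2 * (m:ℝ) - n) / ((n:ℝ) * ((n:ℝ) - 1))
      = ((n:ℝ)^2 - 2*(m:ℝ)) / ((n:ℝ) * ((n:ℝ) - 1)) := by
    field_simp
    ring
  rw [hfact]
  have hnum : (0:ℝ) ≤ (n:ℝ)^2 - 2*(m:ℝ) := by nlinarith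
  by_cases hcase : n ≤ 2 * m
  · -- main case
    have hsN : (n:ℝ) ≤ 2 * (m:ℝ) := by exact_mod_cast hcase
    set s : ℝ := 2 * (m:ℝ) with hs
    set N : ℝ := (n:ℝ) with hNdef
    have hspos : 0 < s := by simp only [hs]; linarith
    have hA := ryser_hermA G
    set lam := hA.eigenvalues with hlam
    have hsum2 : ∑ i, (lam i)^2 = s := by
      have h := ryser_sum_eig_sq G
      rw [← hm] at h
      exact h
    obtain ⟨y, hy1, hy2⟩ := ryser_rayleigh G
    rw [← hn] at hy1
    rw [← hm] at hy2
    -- max eigenvalue in absolute value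
    obtain ⟨i0, -, hi0⟩ := Finset.exists_max_image Finset.univ (fun i => |lam i|)
      (Finset.univ_nonempty_iff.mpr (Fintype.card_pos_iff.mp (by omega)))
    have hmax : s ≤ |lam i0| * N := by
      have step1 : s = ∑ i, lam i * (y i)^2 := hy2.symm
      have step2 : ∑ i, lam i * (y i)^2 ≤ ∑ i, |lam i0| * (y i)^2 := by
        refine Finset.sum_le_sum fun i _ => ?_
        have : lam i ≤ |lam i0| := le_trans (le_abs_self _) (hi0 i (Finset.mem_univ i))
        exact mul_le_mul_of_nonneg_right this (sq_nonneg _)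
      have step3 : ∑ i, |lam i0| * (y i)^2 = |lam i0| * N := by
        rw [← Finset.mul_sum, hy1]
      linarith [step1, step2, step3]
    set t : ℝ := (lam i0)^2 with ht
    have ht1 : (s/N)^2 ≤ t := by
      have h0 : 0 ≤ s / N := by positivity
      have h1 : s / N ≤ |lam i0| := by
        rw [div_le_iff₀ hNpos]
        exact hmax
      calc (s/N)^2 ≤ |lam i0|^2 := by nlinarith
        _ = t := sq_abs _
    have ht2 : t ≤ s := by
      rw [← hsum2]
      exact Finset.single_le_sum (f := fun i => (lam i)^2) (fun i _ => sq_nonneg _)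
        (Finset.mem_univ i0)
    set b : ℝ := s * (N^2 - s) / (N^2 * (N - 1)) with hb
    have hNNs : 0 < N^2 - s := by nlinarith
    have hb1 : 1 ≤ b := by
      rw [hb, le_div_iff₀ (by positivity)]
      nlinarith [mul_nonneg (sub_nonneg.2 hsN) (sub_nonneg.2 hedgeR)]
    have hb0 : 0 < b := lt_of_lt_of_le one_pos hb1
    set a : V → ℝ := fun i => if i = i0 then (s/N)^2 else b with ha
    -- the sum condition
    have hsumdiv : ∑ i, (lam i)^2 / a i ≤ (Finset.univ : Finset V).card := by
      rw [← Finset.add_sum_erase _ _ (Finset.mem_univ i0)]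
      have e1 : ∑ i ∈ Finset.univ.erase i0, (lam i)^2 / a i
          = (∑ i ∈ Finset.univ.erase i0, (lam i)^2) / b := by
        rw [Finset.sum_div]
        refine Finset.sum_congr rfl fun i hi => ?_
        rw [ha]
        simp [Finset.ne_of_mem_erase hi]
      have e2 : ∑ i ∈ Finset.univ.erase i0, (lam i)^2 = s - t := by
        have := Finset.add_sum_erase Finset.univ (fun i => (lam i)^2) (Finset.mem_univ i0)
        rw [hsum2] at this
        linarith
      rw [e1, e2]
      have e3 : a i0 = (s/N)^2 := by rw [ha]; simp
      rw [e3]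
      have hcard : ((Finset.univ : Finset V).card : ℝ) = N := by
        rw [Finset.card_univ, ← hn]
      rw [hcard]
      -- scalar inequality
      have hts : s^2 ≤ t * N^2 := by
        have h := ht1
        rw [div_pow, div_le_iff₀ (by positivity)] at h
        linarith
      rw [hb]
      exact ryser_scalar N s t hN2 hsN hedgeR hts ht2
    -- product bound
    have hprod : ∏ i, (lam i)^2 ≤ ∏ i, a i := by
      refine ryser_aux_prod_le _ _ _ (fun i _ => sq_nonneg _) (fun i _ => ?_) hsumdiv
      rw [ha]
      dsimp only
      split
      · positivity
      · exact hb0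
    have hprodA : ∏ i, a i = (s/N)^2 * b^(n-1) := by
      rw [← Finset.mul_prod_erase _ _ (Finset.mem_univ i0)]
      congr 1
      · rw [ha]; simp
      · have e4 : ∀ i ∈ Finset.univ.erase i0, a i = b := by
          intro i hi
          rw [ha]
          dsimp only
          rw [if_neg (Finset.ne_of_mem_erase hi)]
        rw [Finset.prod_congr rfl e4, Finset.prod_const,
          Finset.card_erase_of_mem (Finset.mem_univ i0), Finset.card_univ, ← hn]
    -- determinant
    have hdetR : (((G.adjMatrix ℤ).det : ℤ) : ℝ) = (G.adjMatrix ℝ).det := ryser_det_cast G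
    have hdetprod : (G.adjMatrix ℝ).det = ∏ i, lam i := by
      have := hA.det_eq_prod_eigenvalues
      rw [this]
      norm_cast
    have hdet2 : (((G.adjMatrix ℤ).det : ℤ) : ℝ)^2 ≤ (s/N)^2 * b^(n-1) := by
      rw [hdetR, hdetprod, ← Finset.prod_pow]
      rw [hprodA] at hprod
      exact hprod
    -- RHS equals (s/N) * b^(n-1)
    have hRHS : (s/N) ^ n * ((N^2 - s) / (N * (N - 1))) ^ (n - 1)
        = (s/N) * b^(n-1) := by
      have hbeq : b = (s/N) * ((N^2 - s)/(N*(N-1))) := by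
        rw [hb]
        field_simp
      have hps : (s/N)^n = (s/N) * (s/N)^(n-1) := by
        conv_lhs => rw [show n = (n-1)+1 from by omega]
        rw [pow_succ]
        ring
      rw [hps, hbeq, mul_pow, mul_assoc]
    rw [hRHS]
    -- conclude via squares
    have hb1n : 1 ≤ b^(n-1) := one_le_pow₀ hb1
    have hbig : (((G.adjMatrix ℤ).det : ℤ) : ℝ)^2 ≤ ((s/N) * b^(n-1))^2 := by
      calc (((G.adjMatrix ℤ).det : ℤ) : ℝ)^2 ≤ (s/N)^2 * b^(n-1) := hdet2
        _ ≤ (s/N)^2 * (b^(n-1) * b^(n-1)) := by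
            refine mul_le_mul_of_nonneg_left ?_ (sq_nonneg _)
            exact le_mul_of_one_le_left (pow_nonneg hb0.le _) hb1n
        _ = ((s/N) * b^(n-1))^2 := by ring
    have hnn : (0:ℝ) ≤ (s/N) * b^(n-1) :=
      mul_nonneg (div_nonneg hspos.le hNpos.le) (pow_nonneg hb0.le _)
    have := Real.sqrt_le_sqrt hbig
    rw [Real.sqrt_sq_eq_abs, Real.sqrt_sq hnn] at this
    exact this
  · -- isolated vertex case : det = 0
    push_neg at hcase
    have hiso : ∃ v : V, G.degree v = 0 := by
      by_contra h
      push_neg at h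
      have hle : Fintype.card V ≤ ∑ v, G.degree v := by
        calc Fintype.card V = ∑ _v : V, 1 := by simp
          _ ≤ ∑ v, G.degree v :=
            Finset.sum_le_sum fun v _ => Nat.one_le_iff_ne_zero.2 (h v)
      rw [SimpleGraph.sum_degrees_eq_twice_card_edges] at hle
      omega
    obtain ⟨v, hv⟩ := hiso
    have hrow : ∀ j, G.adjMatrix ℤ v j = 0 := by
      intro j
      have hne : ¬ G.Adj v j := by
        intro hadj
        have : j ∈ G.neighborFinset v := (SimpleGraph.mem_neighborFinset _ _ _).2 hadj
        have := Finset.card_pos.2 ⟨j, this⟩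
        rw [← SimpleGraph.degree] at this
        omega
      rw [SimpleGraph.adjMatrix_apply, if_neg hne]
    have hdet0 : (G.adjMatrix ℤ).det = 0 :=
      Matrix.det_eq_zero_of_row_eq_zero v hrow
    rw [hdet0]
    simp only [Int.cast_zero, abs_zero]
    positivity
end

section
/- Let G be a finite simple graph with m ≥ 1 edges, and let d be the greatest common divisor of the degrees of all vertices of G. Then the integer d · gcd(2m/d, d) divides det(G). -/
private lemma updateRow_updateRow {n R : Type*} [DecidableEq n] (A : Matrix n n R) (i : n)
    (b c : n → R) : (A.updateRow i b).updateRow i c = A.updateRow i c := by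
  funext i' j
  by_cases h : i' = i
  · subst h; rw [Matrix.updateRow_self, Matrix.updateRow_self]
  · rw [Matrix.updateRow_ne h, Matrix.updateRow_ne h, Matrix.updateRow_ne h]

theorem gcd_degrees_dvd_det {V : Type*} [Fintype V] [DecidableEq V]
    (G : SimpleGraph V) [DecidableRel G.Adj]
    (m : ℕ) (hm : m = G.edgeFinset.card) (hm1 : 1 ≤ m)
    (d : ℕ) (hd : d = Finset.univ.gcd (fun v => G.degree v)) :
    ((d * Nat.gcd (2 * m / d) d : ℕ) : ℤ) ∣ (G.adjMatrix ℤ).det := by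
  classical
  set A := G.adjMatrix ℤ with hA
  -- V is nonempty
  have hne : G.edgeFinset.Nonempty := Finset.card_pos.mp (by omega)
  obtain ⟨e, he⟩ := hne
  haveI hV : Nonempty V := ⟨e.out.1⟩
  obtain ⟨v₀⟩ := hV
  -- d divides every degree
  have hdvd : ∀ v, d ∣ G.degree v := fun v => hd ▸ Finset.gcd_dvd (Finset.mem_univ v)
  have hsum : ∑ v, G.degree v = 2 * m := by
    rw [hm]; exact G.sum_degrees_eq_twice_card_edges
  have hd2m : d ∣ 2 * m := hsum ▸ Finset.dvd_sum (fun v _ => hdvd v)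
  have hdpos : 0 < d := by
    rcases Nat.eq_zero_or_pos d with h | h
    · exfalso
      have h0 : ∀ v, G.degree v = 0 := fun v => by
        have := hdvd v; rw [h] at this; simpa using this
      have : (2 * m) = 0 := by rw [← hsum]; simp [h0]
      omega
    · exact h
  set g := Nat.gcd (2 * m / d) d with hg
  have hgpos : 0 < g := Nat.gcd_pos_of_pos_right _ hdpos
  haveI : NeZero g := ⟨hgpos.ne'⟩
  -- row sums of A are degrees
  have hrow : ∀ i, ∑ j, A i j = (G.degree i : ℤ) := by
    intro i
    simp [hA, SimpleGraph.adjMatrix_apply, SimpleGraph.degree, SimpleGraph.neighborFinset,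
      Finset.sum_boole, Set.toFinset, Set.mem_setOf_eq]
    exact (Fintype.card_subtype _).symm
  have hsymm : ∀ i j, A i j = A j i := by
    intro i j; simp [hA, SimpleGraph.adjMatrix_apply, G.adj_comm]
  -- B: replace row v₀ by the vector of degrees
  set B := A.updateRow v₀ (fun j => (G.degree j : ℤ)) with hB
  have hdetB : B.det = A.det := by
    have h := Matrix.det_updateRow_sum A v₀ (fun _ => (1 : ℤ))
    have hcol : (∑ k, (1 : ℤ) • A k) = fun j => (G.degree j : ℤ) := by
      funext j
      simp only [one_smul, Finset.sum_apply]
      rw [Finset.sum_apply (g := fun k => (A k : V → ℤ))]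
      rw [Finset.sum_congr rfl (fun k _ => hsymm k j), hrow j]
    rw [hcol] at h
    simpa [hB] using h
  have hBrow_ne : ∀ i, i ≠ v₀ → B i = A i := fun i hi => by
    rw [hB, Matrix.updateRow_ne hi]
  have hBrow_self : B v₀ = fun j => (G.degree j : ℤ) := by
    rw [hB, Matrix.updateRow_self]
  -- C: replace column v₀ by the vector of row sums of B
  set C := B.updateCol v₀ (fun i => ∑ j, B i j) with hC
  have hdetC : C.det = B.det := by
    have h := Matrix.det_updateCol_sum B v₀ (fun _ => (1 : ℤ))
    simpa [hC] using h
  -- entries of C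
  have hCrow : ∀ i, i ≠ v₀ → ∀ j, C i j = (if j = v₀ then (G.degree i : ℤ) else A i j) := by
    intro i hi j
    by_cases hj : j = v₀
    · rw [hj, if_pos rfl, hC, Matrix.updateCol_self]
      simp only [hBrow_ne i hi]
      exact hrow i
    · rw [if_neg hj, hC, Matrix.updateCol_ne hj]
      simp only [hBrow_ne i hi]
  have hCv₀ : ∀ j, C v₀ j = (if j = v₀ then ((2 * m : ℕ) : ℤ) else (G.degree j : ℤ)) := by
    intro j
    by_cases hj : j = v₀
    · rw [hj, if_pos rfl, hC, Matrix.updateCol_self]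
      simp only [hBrow_self]
      exact_mod_cast hsum
    · rw [if_neg hj, hC, Matrix.updateCol_ne hj]
      simp only [hBrow_self]
  -- factor d out of row v₀ of C
  set r : V → ℤ := fun j => if j = v₀ then ((2 * m / d : ℕ) : ℤ) else ((G.degree j / d : ℕ) : ℤ)
    with hr
  set M := C.updateRow v₀ r with hM
  have hCM : C = M.updateRow v₀ ((d : ℤ) • r) := by
    rw [hM, updateRow_updateRow]
    funext i j
    by_cases hi : i = v₀
    · rw [hi, Matrix.updateRow_self, hCv₀ j]
      by_cases hj : j = v₀
      · rw [hj, if_pos rfl]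
        simp only [Pi.smul_apply, smul_eq_mul, hr]
        rw [if_pos trivial, ← Nat.cast_mul, Nat.mul_div_cancel' hd2m]
      · rw [if_neg hj]
        simp only [Pi.smul_apply, smul_eq_mul, hr]
        rw [if_neg hj, ← Nat.cast_mul, Nat.mul_div_cancel' (hdvd j)]
    · rw [Matrix.updateRow_ne hi]
  have hdetM : C.det = (d : ℤ) * M.det := by
    rw [hCM, Matrix.det_updateRow_smul, hM, updateRow_updateRow]
  -- g divides det M : column v₀ of M is divisible by g
  have hgdvdM : (g : ℤ) ∣ M.det := by
    have hcast : ((M.det : ℤ) : ZMod g) = (M.map (Int.cast : ℤ → ZMod g)).det :=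
      RingHom.map_det (Int.castRingHom (ZMod g)) M
    have hzero : (M.map (Int.cast : ℤ → ZMod g)).det = 0 := by
      apply Matrix.det_eq_zero_of_column_eq_zero v₀
      intro i
      simp only [Matrix.map_apply]
      rw [ZMod.intCast_zmod_eq_zero_iff_dvd]
      by_cases hi : i = v₀
      · rw [hi, hM, Matrix.updateRow_self, hr]
        simp only [if_pos rfl]
        exact Int.natCast_dvd_natCast.mpr (Nat.gcd_dvd_left _ _)
      · rw [hM, Matrix.updateRow_ne hi, hCrow i hi v₀]
        simp only [if_pos rfl]
        exact Int.natCast_dvd_natCast.mpr ((Nat.gcd_dvd_right _ _).trans (hdvd i))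
    rw [← ZMod.intCast_zmod_eq_zero_iff_dvd, hcast, hzero]
  -- conclude
  obtain ⟨k, hk⟩ := hgdvdM
  refine ⟨k, ?_⟩
  rw [← hdetB, ← hdetC, hdetM, hk]
  push_cast
  ring
end

section
/- For every natural number n > 5, there exists a simple graph G on n vertices with det(G) > 4, and there exists a simple graph H on n vertices with det(H) < -4. -/
open Matrix SimpleGraph

/-- The determinant of the adjacency matrix of the complete graph on `Fin m`. -/
lemma aux_det_top (m : ℕ) [DecidableRel (⊤ : SimpleGraph (Fin m)).Adj] :
    ((⊤ : SimpleGraph (Fin m)).adjMatrix ℤ).det = (-1) ^ (m + 1) * ((m : ℤ) - 1) := by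
  have h : (⊤ : SimpleGraph (Fin m)).adjMatrix ℤ
      = -((1 : Matrix (Fin m) (Fin m) ℤ) +
          replicateCol Unit (fun _ => (-1 : ℤ)) * replicateRow Unit (fun _ => (1 : ℤ))) := by
    ext i j
    by_cases hij : i = j <;>
      simp [adjMatrix_apply, hij, Matrix.mul_apply, Matrix.one_apply]
  rw [h, det_neg, det_one_add_replicateCol_mul_replicateRow]
  simp [dotProduct, Fintype.card_fin, pow_succ]
  ring

/-- The determinant of a disjoint sum of graphs is the product of determinants. -/
lemma aux_det_sum {α β : Type*} [Fintype α] [Fintype β] [DecidableEq α] [DecidableEq β]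
    (G : SimpleGraph α) (H : SimpleGraph β) [DecidableRel G.Adj] [DecidableRel H.Adj]
    [DecidableRel (G ⊕g H).Adj] :
    ((G ⊕g H).adjMatrix ℤ).det = (G.adjMatrix ℤ).det * (H.adjMatrix ℤ).det := by
  have h : (G ⊕g H).adjMatrix ℤ
      = fromBlocks (G.adjMatrix ℤ) 0 0 (H.adjMatrix ℤ) := by
    ext (i | i) (j | j) <;> simp [adjMatrix_apply]
  rw [h, det_fromBlocks_zero₂₁]

/-- Pulling a graph back along an equivalence preserves the determinant. -/
lemma aux_det_comap {α β : Type*} [Fintype α] [Fintype β] [DecidableEq α] [DecidableEq β]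
    (e : α ≃ β) (G : SimpleGraph β) [DecidableRel G.Adj]
    [DecidableRel (G.comap (e : α → β)).Adj] :
    ((G.comap (e : α → β)).adjMatrix ℤ).det = (G.adjMatrix ℤ).det := by
  have h : (G.comap (e : α → β)).adjMatrix ℤ = (G.adjMatrix ℤ).submatrix e e := by
    ext i j
    simp [adjMatrix_apply]
  rw [h, det_submatrix_equiv_self]

def D4 : Matrix (Fin 4) (Fin 4) ℤ :=
  !![0,0,0,1; 0,0,1,0; 0,1,0,0; 1,0,0,0]

/-- `K₂` joined to a perfect matching on 4 vertices: a 6-vertex graph with determinant 7. -/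
def S6 : SimpleGraph (Fin 2 ⊕ Fin 4) where
  Adj x y := match x, y with
    | Sum.inl a, Sum.inl b => a ≠ b
    | Sum.inl _, Sum.inr _ => True
    | Sum.inr _, Sum.inl _ => True
    | Sum.inr i, Sum.inr j => (i : ℕ) + (j : ℕ) = 3
  symm := ⟨by rintro (a | a) (b | b) h <;> simp_all <;> omega⟩
  loopless := ⟨by rintro (a | a) h <;> simp_all <;> omega⟩

lemma aux_det_S6 [DecidableRel S6.Adj] : (S6.adjMatrix ℤ).det = 7 := by
  have hD : D4 * D4 = 1 := by decide
  haveI : Invertible D4 := ⟨D4, hD, hD⟩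
  have hDinv : ⅟D4 = D4 := invOf_eq_right_inv hD
  have hd4 : D4.det = 1 := by decide
  have h : S6.adjMatrix ℤ =
      fromBlocks !![0,1;1,0] (Matrix.of fun _ _ => 1) (Matrix.of fun _ _ => 1) D4 := by
    ext (i | i) (j | j) <;>
      · simp only [adjMatrix_apply]
        fin_cases i <;> fin_cases j <;>
          simp [S6, D4, fromBlocks, Matrix.vecHead, Matrix.vecTail] <;> norm_num <;> decide
  rw [h, det_fromBlocks₂₂, hDinv, hd4, one_mul, Matrix.det_fin_two]
  norm_num [Matrix.mul_apply, Matrix.sub_apply, D4, Fin.sum_univ_succ]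

open scoped Classical in
theorem exists_det_gt_four_and_lt_neg_four (n : ℕ) (hn : 5 < n) :
    (∃ G : SimpleGraph (Fin n), 4 < (G.adjMatrix ℤ).det) ∧
    (∃ H : SimpleGraph (Fin n), (H.adjMatrix ℤ).det < -4) := by
  have h6 : 6 ≤ n := hn
  set m := n - 3 with hm_def
  have hm : 3 + m = n := by omega
  have hm3 : 3 ≤ m := by omega
  -- the disjoint union K₃ ⊔ K_{n-3}, transported to `Fin n`
  let e : Fin n ≃ Fin 3 ⊕ Fin m := (finCongr hm).symm.trans finSumFinEquiv.symm
  rcases Nat.even_or_odd n with he | ho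
  · -- n even
    obtain ⟨k, hk⟩ := he
    constructor
    · by_cases h6' : n = 6
      · subst h6'
        refine ⟨S6.comap (((finCongr (by norm_num : 2 + 4 = 6)).symm.trans
            (finSumFinEquiv (m := 2) (n := 4)).symm : Fin 6 ≃ Fin 2 ⊕ Fin 4) :
            Fin 6 → Fin 2 ⊕ Fin 4), ?_⟩
        rw [aux_det_comap, aux_det_S6]
        norm_num
      · refine ⟨(((⊤ : SimpleGraph (Fin 3)) ⊕g (⊤ : SimpleGraph (Fin m))).comap
            (e : Fin n → Fin 3 ⊕ Fin m)), ?_⟩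
        rw [aux_det_comap, aux_det_sum, aux_det_top, aux_det_top]
        have hev : Even (m + 1) := ⟨k - 1, by omega⟩
        rw [hev.neg_one_pow]
        have h5 : (5 : ℤ) ≤ (m : ℤ) := by exact_mod_cast (by omega : 5 ≤ m)
        norm_num
        linarith
    · refine ⟨⊤, ?_⟩
      rw [aux_det_top]
      have hod : Odd (n + 1) := ⟨k, by omega⟩
      rw [hod.neg_one_pow]
      have h6z : (6 : ℤ) ≤ (n : ℤ) := by exact_mod_cast h6
      linarith
  · -- n odd
    obtain ⟨k, hk⟩ := ho
    constructor
    · refine ⟨⊤, ?_⟩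
      rw [aux_det_top]
      have hev : Even (n + 1) := ⟨k + 1, by omega⟩
      rw [hev.neg_one_pow, one_mul]
      have h6z : (6 : ℤ) ≤ (n : ℤ) := by exact_mod_cast h6
      linarith
    · refine ⟨(((⊤ : SimpleGraph (Fin 3)) ⊕g (⊤ : SimpleGraph (Fin m))).comap
          (e : Fin n → Fin 3 ⊕ Fin m)), ?_⟩
      rw [aux_det_comap, aux_det_sum, aux_det_top, aux_det_top]
      have hod : Odd (m + 1) := ⟨k - 1, by omega⟩
      rw [hod.neg_one_pow]
      have h4 : (4 : ℤ) ≤ (m : ℤ) := by exact_mod_cast (by omega : 4 ≤ m)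
      norm_num
      linarith
end

section
/- Let k and ℓ be even natural numbers with k, ℓ ≥ 3, and let G be a simple graph on k + ℓ - 1 vertices that is the one-point union (wedge) of a cycle of length k and a cycle of length ℓ: there exist cycles c₁ of length k and c₂ of length ℓ in G sharing exactly one common vertex, such that every vertex of G lies on c₁ or c₂ and every edge of G is an edge of c₁ or of c₂. Then det(G) = 0. -/
open SimpleGraph Finset Matrix

section Aux

set_option linter.unusedSectionVars false

variable {V : Type*} [DecidableEq V] {G : SimpleGraph V}

private lemma support_getElem_eq_getVert {a b : V} (p : G.Walk a b) (i : ℕ)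
    (h : i < p.support.length) : p.support[i] = p.getVert i := by
  induction p generalizing i with
  | nil =>
    simp only [SimpleGraph.Walk.support_nil, List.length_cons, List.length_nil] at h
    interval_cases i
    · rfl
  | cons hadj q ih =>
    cases i with
    | zero => simp
    | succ i =>
      simp only [SimpleGraph.Walk.support_cons, List.getElem_cons_succ,
        SimpleGraph.Walk.getVert_cons_succ]
      exact ih i (by simpa [SimpleGraph.Walk.length_support] using h)

private lemma tail_getElem {a b : V} (p : G.Walk a b) (m : ℕ)
    (h : m < p.support.tail.length) : p.support.tail[m] = p.getVert (m + 1) := by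
  rw [List.getElem_tail]
  exact support_getElem_eq_getVert p (m+1) (by simpa using h)

private lemma mem_edges_iff_exists {a b x y : V} (p : G.Walk a b) :
    s(x, y) ∈ p.edges ↔ ∃ i < p.length,
      (p.getVert i = x ∧ p.getVert (i+1) = y) ∨ (p.getVert i = y ∧ p.getVert (i+1) = x) := by
  induction p with
  | nil => simp
  | @cons a c b hadj q ih =>
    rw [SimpleGraph.Walk.edges_cons, List.mem_cons]
    constructor
    · rintro (h | h)
      · rw [Sym2.eq_iff] at h
        refine ⟨0, by simp [SimpleGraph.Walk.length_cons], ?_⟩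
        rcases h with ⟨rfl, rfl⟩ | ⟨rfl, rfl⟩ <;>
          simp [SimpleGraph.Walk.getVert_cons_succ]
      · obtain ⟨i, hi, h⟩ := ih.mp h
        exact ⟨i+1, by simp [SimpleGraph.Walk.length_cons]; omega,
          by simpa [SimpleGraph.Walk.getVert_cons_succ] using h⟩
    · rintro ⟨i, hi, h⟩
      cases i with
      | zero =>
        left
        simp only [SimpleGraph.Walk.getVert_zero, SimpleGraph.Walk.getVert_cons_succ] at h
        rw [Sym2.eq_iff]
        rcases h with ⟨rfl, h2⟩ | ⟨rfl, h2⟩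
        · exact Or.inl ⟨rfl, h2.symm⟩
        · exact Or.inr ⟨h2.symm, rfl⟩
      | succ i =>
        right
        exact ih.mpr ⟨i, by simp [SimpleGraph.Walk.length_cons] at hi; omega,
          by simpa [SimpleGraph.Walk.getVert_cons_succ] using h⟩

private lemma cycle_getVert_inj {w : V} {c : G.Walk w w} (hc : c.IsCycle)
    {i j : ℕ} (hi : i < c.length) (hj : j < c.length) (h : c.getVert i = c.getVert j) :
    i = j := by
  have hnd : c.support.tail.Nodup := hc.support_nodup
  have htl : c.support.tail.length = c.length := by
    simp [SimpleGraph.Walk.length_support]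
  have key : ∀ m m' (hm : m < c.length) (hm' : m' < c.length),
      c.getVert (m+1) = c.getVert (m'+1) → m = m' := by
    intro m m' hm hm' hmm
    have h1 : c.support.tail[m]'(by omega) = c.getVert (m+1) := tail_getElem c m (by omega)
    have h2 : c.support.tail[m']'(by omega) = c.getVert (m'+1) := tail_getElem c m' (by omega)
    exact (hnd.getElem_inj_iff (hi := by omega) (hj := by omega)).mp (by rw [h1, h2, hmm])
  have hlast : c.getVert c.length = c.getVert 0 := by
    rw [SimpleGraph.Walk.getVert_length, SimpleGraph.Walk.getVert_zero]
  have hlen3 := hc.three_le_length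
  cases i with
  | zero =>
    cases j with
    | zero => rfl
    | succ j =>
      exfalso
      have : c.getVert ((c.length - 1) + 1) = c.getVert (j+1) := by
        rw [show c.length - 1 + 1 = c.length by omega, hlast, h]
      have := key _ _ (by omega) (by omega) this
      omega
  | succ i =>
    cases j with
    | zero =>
      exfalso
      have : c.getVert (i+1) = c.getVert ((c.length - 1) + 1) := by
        rw [show c.length - 1 + 1 = c.length by omega, hlast, ← h]
      have := key _ _ (by omega) (by omega) this
      omega
    | succ j =>
      have := key i j (by omega) (by omega) h
      omega

private lemma cycle_getVert_mod {w : V} (c : G.Walk w w) {i : ℕ} (hi : i ≤ c.length) :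
    c.getVert (i % c.length) = c.getVert i := by
  rcases lt_or_eq_of_le hi with h | rfl
  · rw [Nat.mod_eq_of_lt h]
  · rw [Nat.mod_self, SimpleGraph.Walk.getVert_zero, SimpleGraph.Walk.getVert_length]

private lemma cycle_adj_iff {w : V} {c : G.Walk w w} (hc : c.IsCycle)
    {j : ℕ} (hj : j < c.length) (y : V) :
    s(c.getVert j, y) ∈ c.edges ↔
      y = c.getVert ((j+1) % c.length) ∨ y = c.getVert ((j + (c.length - 1)) % c.length) := by
  have hn3 := hc.three_le_length
  set n := c.length with hn
  constructor
  · intro h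
    obtain ⟨i, hi, hcase⟩ := (mem_edges_iff_exists c).mp h
    rcases hcase with ⟨h1, h2⟩ | ⟨h1, h2⟩
    · have : i = j := cycle_getVert_inj hc hi hj h1
      subst this
      left
      rw [← h2, cycle_getVert_mod c (by omega)]
    · -- getVert i = y, getVert (i+1) = getVert j
      have hmod : c.getVert ((i+1) % n) = c.getVert j := by
        rw [cycle_getVert_mod c (by omega)]; exact h2
      have hij : (i+1) % n = j := cycle_getVert_inj hc (Nat.mod_lt _ (by omega)) hj hmod
      right
      rcases lt_or_eq_of_le (show i + 1 ≤ n by omega) with hlt | heq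
      · rw [Nat.mod_eq_of_lt hlt] at hij
        have hj1 : 1 ≤ j := by omega
        rw [show j + (n - 1) = (j - 1) + n by omega, Nat.add_mod_right,
          Nat.mod_eq_of_lt (by omega)]
        rw [← h1, show j - 1 = i by omega]
      · rw [heq, Nat.mod_self] at hij
        subst hij
        rw [Nat.zero_add, Nat.mod_eq_of_lt (by omega), ← h1, show n - 1 = i by omega]
  · rintro (rfl | rfl)
    · refine (mem_edges_iff_exists c).mpr ⟨j, hj, Or.inl ⟨rfl, ?_⟩⟩
      rw [cycle_getVert_mod c (by omega)]
    · rcases Nat.eq_zero_or_pos j with rfl | hj1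
      · refine (mem_edges_iff_exists c).mpr ⟨n - 1, by omega, Or.inr ⟨?_, ?_⟩⟩
        · rw [Nat.zero_add, Nat.mod_eq_of_lt (by omega)]
        · rw [show n - 1 + 1 = n by omega, SimpleGraph.Walk.getVert_length,
            SimpleGraph.Walk.getVert_zero]
      · refine (mem_edges_iff_exists c).mpr ⟨j - 1, by omega, Or.inr ⟨?_, ?_⟩⟩
        · rw [show j + (n - 1) = (j - 1) + n by omega, Nat.add_mod_right,
            Nat.mod_eq_of_lt (by omega)]
        · rw [show j - 1 + 1 = j by omega]

private lemma mod_ne_aux {n j : ℕ} (hn : 3 ≤ n) (hj : j < n) :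
    (j+1) % n ≠ (j + (n-1)) % n := by
  rcases lt_or_eq_of_le (show j + 1 ≤ n by omega) with hlt | heq
  · rw [Nat.mod_eq_of_lt hlt]
    rcases Nat.eq_zero_or_pos j with rfl | hj1
    · rw [Nat.zero_add, Nat.mod_eq_of_lt (by omega)]; omega
    · rw [show j + (n-1) = (j-1) + n by omega, Nat.add_mod_right,
        Nat.mod_eq_of_lt (by omega)]
      omega
  · rw [heq, Nat.mod_self, show j + (n-1) = (n-2) + n by omega, Nat.add_mod_right,
      Nat.mod_eq_of_lt (by omega)]
    omega

private def gval (j : ℕ) : ℤ := if j % 2 = 1 then (-1)^((j-1)/2) else 0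

private lemma gval_zero : gval 0 = 0 := by norm_num [gval]

private lemma gval_one : gval 1 = 1 := by norm_num [gval]

private lemma gval_sum_zero {n j : ℕ} (hn : 3 ≤ n) (hne : Even n) (hj1 : 1 ≤ j) (hjn : j < n) :
    gval ((j+1) % n) + gval ((j + (n-1)) % n) = 0 := by
  obtain ⟨t, ht⟩ := hne
  rcases lt_or_eq_of_le (show j + 1 ≤ n by omega) with hlt | heq
  · rw [Nat.mod_eq_of_lt hlt, show j + (n-1) = (j-1) + n by omega, Nat.add_mod_right,
      Nat.mod_eq_of_lt (by omega)]
    rcases Nat.even_or_odd j with ⟨m, hm⟩ | ⟨m, hm⟩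
    · have e1 : (j+1) % 2 = 1 := by omega
      have e2 : (j-1) % 2 = 1 := by omega
      have e3 : (j+1-1)/2 = m := by omega
      have e4 : (j-1-1)/2 = m - 1 := by omega
      simp only [gval, e1, if_pos, e2, e3, e4]
      obtain ⟨r, rfl⟩ : ∃ r, m = r + 1 := ⟨m - 1, by omega⟩
      rw [Nat.add_sub_cancel, pow_succ]
      ring
    · have e1 : (j+1) % 2 = 0 := by omega
      have e2 : (j-1) % 2 = 0 := by omega
      simp [gval, e1, e2]
  · rw [heq, Nat.mod_self, show j + (n-1) = (n-2) + n by omega, Nat.add_mod_right,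
      Nat.mod_eq_of_lt (by omega)]
    have e2 : (n-2) % 2 = 0 := by omega
    simp [gval, e2]

private lemma gval_sum_at_base {n : ℕ} (hn : 3 ≤ n) (hne : Even n) :
    gval ((0+1) % n) + gval ((0 + (n-1)) % n) = 1 + (-1)^((n-2)/2) := by
  obtain ⟨t, ht⟩ := hne
  rw [Nat.zero_add, Nat.zero_add, Nat.mod_eq_of_lt (by omega), Nat.mod_eq_of_lt (by omega)]
  have e1 : (n-1) % 2 = 1 := by omega
  have e2 : (n-1-1)/2 = (n-2)/2 := by omega
  rw [gval_one]
  simp only [gval, e1, if_pos, e2]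

private lemma indexOf_getVert_cycle {w : V} {c : G.Walk w w} (hc : c.IsCycle)
    {j : ℕ} (hj : j < c.length) : c.support.idxOf (c.getVert j) = j := by
  have hn3 := hc.three_le_length
  have hmem : c.getVert j ∈ c.support :=
    SimpleGraph.Walk.mem_support_iff_exists_getVert.mpr ⟨j, rfl, by omega⟩
  have hlt : c.support.idxOf (c.getVert j) < c.support.length :=
    List.idxOf_lt_length_iff.mpr hmem
  have hx : c.support[c.support.idxOf (c.getVert j)] = c.getVert j :=
    List.getElem_idxOf hlt
  rw [support_getElem_eq_getVert] at hx
  rw [SimpleGraph.Walk.length_support] at hlt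
  rcases lt_or_eq_of_le (show c.support.idxOf (c.getVert j) ≤ c.length by omega) with h | h
  · exact cycle_getVert_inj hc h hj hx
  · exfalso
    rw [h, SimpleGraph.Walk.getVert_length] at hx
    have hj0 : 0 = j := cycle_getVert_inj hc (by omega) hj
      (by rw [SimpleGraph.Walk.getVert_zero]; exact hx)
    have h0 : c.support.idxOf (c.getVert j) = 0 := by
      rw [← hj0, SimpleGraph.Walk.getVert_zero]
      rw [SimpleGraph.Walk.support_eq_cons]
      exact List.idxOf_cons_eq _ rfl
    omega

private lemma cycle_sum [Fintype V] {w x : V} {c : G.Walk w w} (hc : c.IsCycle)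
    (f : V → ℤ) (a : ℤ) (hf : ∀ j < c.length, f (c.getVert j) = a * gval j)
    {j : ℕ} (hj : j < c.length) (hx : c.getVert j = x) :
    ∑ y ∈ univ.filter (fun y => s(x, y) ∈ c.edges), f y
      = a * (gval ((j+1) % c.length) + gval ((j + (c.length - 1)) % c.length)) := by
  subst hx
  have hn3 := hc.three_le_length
  have hset : univ.filter (fun y => s(c.getVert j, y) ∈ c.edges)
      = {c.getVert ((j+1) % c.length), c.getVert ((j + (c.length - 1)) % c.length)} := by
    ext y
    simp only [mem_filter, mem_univ, true_and, mem_insert, mem_singleton]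
    exact cycle_adj_iff hc hj y
  have hne' : c.getVert ((j+1) % c.length) ≠ c.getVert ((j + (c.length - 1)) % c.length) := by
    intro h
    exact mod_ne_aux hn3 hj
      (cycle_getVert_inj hc (Nat.mod_lt _ (by omega)) (Nat.mod_lt _ (by omega)) h)
  rw [hset, Finset.sum_pair hne', hf _ (Nat.mod_lt _ (by omega)), hf _ (Nat.mod_lt _ (by omega))]
  ring

end Aux

theorem det_wedge_of_two_even_cycles {V : Type*} [Fintype V] [DecidableEq V]
    (G : SimpleGraph V) [DecidableRel G.Adj]
    (k l : ℕ) (hk3 : 3 ≤ k) (hl3 : 3 ≤ l) (hke : Even k) (hle : Even l)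
    (hcard : Fintype.card V = k + l - 1)
    (u v : V) (c₁ : G.Walk u u) (c₂ : G.Walk v v)
    (hc₁ : c₁.IsCycle) (hc₂ : c₂.IsCycle)
    (hlen₁ : c₁.length = k) (hlen₂ : c₂.length = l)
    (hshare : ∃! w : V, w ∈ c₁.support ∧ w ∈ c₂.support)
    (hvert : ∀ x : V, x ∈ c₁.support ∨ x ∈ c₂.support)
    (hedge : ∀ e ∈ G.edgeSet, e ∈ c₁.edges ∨ e ∈ c₂.edges) :
    (G.adjMatrix ℤ).det = 0 := by
  classical
  obtain ⟨w, ⟨hw1, hw2⟩, hwu⟩ := hshare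
  set d₁ := c₁.rotate w hw1 with hd₁def
  set d₂ := c₂.rotate w hw2 with hd₂def
  have hd₁c : d₁.IsCycle := hc₁.rotate hw1
  have hd₂c : d₂.IsCycle := hc₂.rotate hw2
  have hL₁ : d₁.length = k := by
    have h := (c₁.rotate_darts w hw1).perm.length_eq
    rw [SimpleGraph.Walk.length_darts, SimpleGraph.Walk.length_darts] at h
    rw [h, hlen₁]
  have hL₂ : d₂.length = l := by
    have h := (c₂.rotate_darts w hw2).perm.length_eq
    rw [SimpleGraph.Walk.length_darts, SimpleGraph.Walk.length_darts] at h
    rw [h, hlen₂]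
  have hE₁ : ∀ e, e ∈ d₁.edges ↔ e ∈ c₁.edges := fun e => (c₁.rotate_edges w hw1).perm.mem_iff
  have hE₂ : ∀ e, e ∈ d₂.edges ↔ e ∈ c₂.edges := fun e => (c₂.rotate_edges w hw2).perm.mem_iff
  have tailmem : ∀ (z : V) (c : G.Walk z z), 0 < c.length →
      ∀ x, (x ∈ c.support ↔ x ∈ c.support.tail) := by
    intro z c hlen x
    constructor
    · intro hx
      rw [SimpleGraph.Walk.support_eq_cons] at hx
      rcases List.mem_cons.mp hx with rfl | h
      · have hlt : c.length - 1 < c.support.tail.length := by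
          rw [List.length_tail, SimpleGraph.Walk.length_support]; omega
        have : c.support.tail[c.length - 1] = x := by
          rw [tail_getElem c _ hlt, show c.length - 1 + 1 = c.length by omega,
            SimpleGraph.Walk.getVert_length]
        have hm : c.support.tail[c.length - 1] ∈ c.support.tail := List.getElem_mem hlt
        rwa [this] at hm
      · exact h
    · intro hx
      rw [SimpleGraph.Walk.support_eq_cons]
      exact List.mem_cons_of_mem _ hx
  have hs₁ : ∀ x, x ∈ d₁.support ↔ x ∈ c₁.support := by
    intro x
    rw [tailmem _ d₁ (by omega), tailmem _ c₁ (by omega)]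
    exact (SimpleGraph.Walk.support_rotate c₁ w hw1).perm.mem_iff
  have hs₂ : ∀ x, x ∈ d₂.support ↔ x ∈ c₂.support := by
    intro x
    rw [tailmem _ d₂ (by omega), tailmem _ c₂ (by omega)]
    exact (SimpleGraph.Walk.support_rotate c₂ w hw2).perm.mem_iff
  have huniq : ∀ x, x ∈ d₁.support → x ∈ d₂.support → x = w := fun x h1 h2 =>
    hwu x ⟨(hs₁ x).mp h1, (hs₂ x).mp h2⟩
  -- the two component functions
  set f₁ : V → ℤ := fun x => if x ∈ d₁.support then gval (d₁.support.idxOf x) else 0 with hf₁def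
  set f₂ : V → ℤ := fun x => if x ∈ d₂.support then gval (d₂.support.idxOf x) else 0 with hf₂def
  have hA₁ : ∀ j, j < d₁.length → f₁ (d₁.getVert j) = gval j := by
    intro j hj
    have hmem : d₁.getVert j ∈ d₁.support :=
      SimpleGraph.Walk.mem_support_iff_exists_getVert.mpr ⟨j, rfl, by omega⟩
    rw [hf₁def]
    simp only [if_pos hmem]
    rw [indexOf_getVert_cycle hd₁c hj]
  have hA₂ : ∀ j, j < d₂.length → f₂ (d₂.getVert j) = gval j := by
    intro j hj
    have hmem : d₂.getVert j ∈ d₂.support :=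
      SimpleGraph.Walk.mem_support_iff_exists_getVert.mpr ⟨j, rfl, by omega⟩
    rw [hf₂def]
    simp only [if_pos hmem]
    rw [indexOf_getVert_cycle hd₂c hj]
  have hW₁ : f₁ w = 0 := by
    have := hA₁ 0 (by omega)
    rw [SimpleGraph.Walk.getVert_zero] at this
    rw [this, gval_zero]
  have hW₂ : f₂ w = 0 := by
    have := hA₂ 0 (by omega)
    rw [SimpleGraph.Walk.getVert_zero] at this
    rw [this, gval_zero]
  have hO₁ : ∀ x, x ∉ d₁.support → f₁ x = 0 := by
    intro x hx; rw [hf₁def]; simp only [if_neg hx]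
  have hO₂ : ∀ x, x ∉ d₂.support → f₂ x = 0 := by
    intro x hx; rw [hf₂def]; simp only [if_neg hx]
  have hV₂on₁ : ∀ x, x ∈ d₁.support → f₂ x = 0 := by
    intro x hx
    by_cases h : x ∈ d₂.support
    · rw [huniq x hx h]; exact hW₂
    · exact hO₂ x h
  have hV₁on₂ : ∀ x, x ∈ d₂.support → f₁ x = 0 := by
    intro x hx
    by_cases h : x ∈ d₁.support
    · rw [huniq x h hx]; exact hW₁
    · exact hO₁ x h
  -- choice of coefficients
  have hpow : ∀ m : ℕ, (1 + (-1:ℤ)^m = 0) ∨ (1 + (-1:ℤ)^m = 2) := by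
    intro m
    rcases Nat.even_or_odd m with h | h
    · right; rw [h.neg_one_pow]; norm_num
    · left; rw [h.neg_one_pow]; norm_num
  obtain ⟨a, b, hzero, hwitness⟩ :
      ∃ a b : ℤ, a * (1 + (-1:ℤ)^((k-2)/2)) + b * (1 + (-1:ℤ)^((l-2)/2)) = 0 ∧
        (a = 1 ∨ (a = 0 ∧ b = 1)) := by
    rcases hpow ((k-2)/2) with h | h
    · exact ⟨1, 0, by rw [h]; ring, Or.inl rfl⟩
    · rcases hpow ((l-2)/2) with h' | h'
      · exact ⟨0, 1, by rw [h']; ring, Or.inr ⟨rfl, rfl⟩⟩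
      · exact ⟨1, -1, by rw [h, h']; ring, Or.inl rfl⟩
  set f : V → ℤ := fun x => a * f₁ x + b * f₂ x with hfdef
  have hfc₁ : ∀ j, j < d₁.length → f (d₁.getVert j) = a * gval j := by
    intro j hj
    have hmem : d₁.getVert j ∈ d₁.support :=
      SimpleGraph.Walk.mem_support_iff_exists_getVert.mpr ⟨j, rfl, by omega⟩
    rw [hfdef]
    simp only
    rw [hA₁ j hj, hV₂on₁ _ hmem, mul_zero, add_zero]
  have hfc₂ : ∀ j, j < d₂.length → f (d₂.getVert j) = b * gval j := by
    intro j hj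
    have hmem : d₂.getVert j ∈ d₂.support :=
      SimpleGraph.Walk.mem_support_iff_exists_getVert.mpr ⟨j, rfl, by omega⟩
    rw [hfdef]
    simp only
    rw [hA₂ j hj, hV₁on₂ _ hmem, mul_zero, zero_add]
  -- splitting the neighborhood
  have hsplit : ∀ x : V, G.neighborFinset x =
      (univ.filter (fun y => s(x,y) ∈ d₁.edges)) ∪ (univ.filter (fun y => s(x,y) ∈ d₂.edges)) := by
    intro x
    ext y
    simp only [SimpleGraph.mem_neighborFinset, Finset.mem_union, Finset.mem_filter,
      Finset.mem_univ, true_and]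
    constructor
    · intro h
      rcases hedge s(x,y) ((G.mem_edgeSet).mpr h) with h1 | h1
      · exact Or.inl ((hE₁ _).mpr h1)
      · exact Or.inr ((hE₂ _).mpr h1)
    · rintro (h | h)
      · exact SimpleGraph.Walk.adj_of_mem_edges d₁ h
      · exact SimpleGraph.Walk.adj_of_mem_edges d₂ h
  have hdisj : ∀ x : V, Disjoint (univ.filter (fun y => s(x,y) ∈ d₁.edges))
      (univ.filter (fun y => s(x,y) ∈ d₂.edges)) := by
    intro x
    rw [Finset.disjoint_left]
    intro y hy1 hy2
    simp only [Finset.mem_filter, Finset.mem_univ, true_and] at hy1 hy2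
    have hx : x = w := huniq x (SimpleGraph.Walk.fst_mem_support_of_mem_edges d₁ hy1)
      (SimpleGraph.Walk.fst_mem_support_of_mem_edges d₂ hy2)
    have hy : y = w := huniq y (SimpleGraph.Walk.snd_mem_support_of_mem_edges d₁ hy1)
      (SimpleGraph.Walk.snd_mem_support_of_mem_edges d₂ hy2)
    exact (SimpleGraph.Walk.adj_of_mem_edges d₁ hy1).ne (hx.trans hy.symm)
  have hempty : ∀ (z : V) (c : G.Walk z z) (x : V), x ∉ c.support →
      (univ.filter (fun y => s(x,y) ∈ c.edges)) = ∅ := by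
    intro z c x hx
    rw [Finset.filter_eq_empty_iff]
    intro y _ h
    exact hx (SimpleGraph.Walk.fst_mem_support_of_mem_edges c h)
  -- the kernel computation
  have hker : ∀ x : V, ∑ y ∈ G.neighborFinset x, f y = 0 := by
    intro x
    rw [hsplit x, Finset.sum_union (hdisj x)]
    by_cases hx1 : x ∈ d₁.support
    · obtain ⟨j, hjlt, hjx⟩ : ∃ j, j < d₁.length ∧ d₁.getVert j = x := by
        obtain ⟨i, hix, hi⟩ := SimpleGraph.Walk.mem_support_iff_exists_getVert.mp hx1
        rcases lt_or_eq_of_le hi with h | h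
        · exact ⟨i, h, hix⟩
        · exact ⟨0, by omega, by
            rw [SimpleGraph.Walk.getVert_zero, ← hix, h, SimpleGraph.Walk.getVert_length]⟩
      by_cases hx2 : x ∈ d₂.support
      · have hxw : x = w := huniq x hx1 hx2
        have hj0 : j = 0 := by
          apply cycle_getVert_inj hd₁c hjlt (by omega)
          rw [SimpleGraph.Walk.getVert_zero, hjx, hxw]
        subst hj0
        rw [cycle_sum hd₁c f a hfc₁ hjlt hjx,
          cycle_sum hd₂c f b hfc₂ (show 0 < d₂.length by omega)
            (by rw [SimpleGraph.Walk.getVert_zero, hxw]),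
          hL₁, hL₂, gval_sum_at_base hk3 hke, gval_sum_at_base hl3 hle]
        exact hzero
      · have hj1 : 1 ≤ j := by
          rcases Nat.eq_zero_or_pos j with rfl | h
          · exfalso
            rw [SimpleGraph.Walk.getVert_zero] at hjx
            exact hx2 (hjx ▸ d₂.start_mem_support)
          · exact h
        rw [cycle_sum hd₁c f a hfc₁ hjlt hjx, hempty _ d₂ x hx2, Finset.sum_empty, hL₁,
          gval_sum_zero hk3 hke hj1 (hL₁ ▸ hjlt), mul_zero, add_zero]
    · by_cases hx2 : x ∈ d₂.support
      · obtain ⟨j, hjlt, hjx⟩ : ∃ j, j < d₂.length ∧ d₂.getVert j = x := by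
          obtain ⟨i, hix, hi⟩ := SimpleGraph.Walk.mem_support_iff_exists_getVert.mp hx2
          rcases lt_or_eq_of_le hi with h | h
          · exact ⟨i, h, hix⟩
          · exact ⟨0, by omega, by
              rw [SimpleGraph.Walk.getVert_zero, ← hix, h, SimpleGraph.Walk.getVert_length]⟩
        have hj1 : 1 ≤ j := by
          rcases Nat.eq_zero_or_pos j with rfl | h
          · exfalso
            rw [SimpleGraph.Walk.getVert_zero] at hjx
            exact hx1 (hjx ▸ d₁.start_mem_support)
          · exact h
        rw [cycle_sum hd₂c f b hfc₂ hjlt hjx, hempty _ d₁ x hx1, Finset.sum_empty, hL₂,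
          gval_sum_zero hl3 hle hj1 (hL₂ ▸ hjlt), mul_zero, zero_add]
      · rw [hempty _ d₁ x hx1, hempty _ d₂ x hx2]
        simp
  -- nontriviality
  have hfne : f ≠ 0 := by
    rcases hwitness with rfl | ⟨rfl, rfl⟩
    · intro h
      have h1 : f (d₁.getVert 1) = 1 := by
        rw [hfc₁ 1 (by omega), gval_one, one_mul]
      rw [h] at h1
      simp at h1
    · intro h
      have h1 : f (d₂.getVert 1) = 1 := by
        rw [hfc₂ 1 (by omega), gval_one, one_mul]
      rw [h] at h1
      simp at h1
  have hmul : G.adjMatrix ℤ *ᵥ f = 0 := by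
    funext x
    rw [SimpleGraph.adjMatrix_mulVec_apply]
    exact hker x
  exact Matrix.exists_mulVec_eq_zero_iff.mp ⟨f, hfne, hmul⟩
end

section
/- Let k and ℓ be odd natural numbers with k, ℓ ≥ 3, and let G be a simple graph on k + ℓ - 1 vertices that is the one-point union (wedge) of a cycle of length k and a cycle of length ℓ: there exist cycles c₁ of length k and c₂ of length ℓ in G sharing exactly one common vertex, such that every vertex of G lies on c₁ or c₂ and every edge of G is an edge of c₁ or of c₂. Then det(G) = 2 · (-1)^(ℓ+k-1) · ((-1)^((ℓ-1)/2 + 1) + (-1)^((k-1)/2 + 1)). -/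
open Matrix

def pathM (m : ℕ) : Matrix (Fin m) (Fin m) ℚ :=
  Matrix.of fun i j => if (i : ℕ) + 1 = j ∨ (j : ℕ) + 1 = i then 1 else 0

lemma pathM_succ_succ (m : ℕ) : (pathM (m + 2)).det = -(pathM m).det := by
  have h1 : ((1 : Fin (m+2)) : ℕ) = 1 := rfl
  rw [Matrix.det_succ_row_zero]
  rw [Finset.sum_eq_single (1 : Fin (m + 2))]
  · have h01 : pathM (m+2) 0 1 = 1 := by
      simp only [pathM, Matrix.of_apply]; rw [if_pos]; left; simp [h1]
    rw [h01]
    have hN : ((pathM (m+2)).submatrix Fin.succ (Fin.succAbove 1)).det = (pathM m).det := by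
      rw [Matrix.det_succ_column_zero]
      rw [Finset.sum_eq_single (0 : Fin (m + 1))]
      · have e0 : (pathM (m+2)).submatrix Fin.succ (Fin.succAbove 1) 0 0 = 1 := by
          simp only [Matrix.submatrix_apply, pathM, Matrix.of_apply]
          rw [if_pos]
          right
          simp [Fin.succAbove, Fin.lt_def]
        rw [e0]
        have hM' : ((pathM (m+2)).submatrix Fin.succ (Fin.succAbove 1)).submatrix
            (Fin.succAbove 0) Fin.succ = pathM m := by
          ext s t
          simp only [Matrix.submatrix_apply, pathM, Matrix.of_apply]
          have hs : (((0 : Fin (m+1)).succAbove s).succ : ℕ) = (s : ℕ) + 2 := by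
            simp [Fin.succAbove, Fin.lt_def]
          have ht : (((1 : Fin (m+2)).succAbove t.succ) : ℕ) = (t : ℕ) + 2 := by
            simp [Fin.succAbove, Fin.lt_def]
          rw [hs, ht]
          congr 1
          simp only [eq_iff_iff]
          omega
        rw [hM']
        simp
      · intro i _ hi
        have hz : pathM (m+2) i.succ 0 = 0 := by
          simp only [pathM, Matrix.of_apply]
          rw [if_neg]
          push_neg
          rw [Fin.val_zero]
          constructor
          · omega
          · intro h
            exact absurd (by ext; simpa using h.symm) hi
        simp only [mul_eq_zero]
        left
        simpa using hz
      · simp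
    rw [hN, h1]
    ring
  · intro j _ hj
    have : pathM (m+2) 0 j = 0 := by
      simp only [pathM, Matrix.of_apply]
      rw [if_neg]
      rintro (h | h)
      · rw [Fin.val_zero] at h
        exact hj (by ext; simp only [h1]; omega)
      · rw [Fin.val_zero] at h; omega
    simp [this]
  · simp

lemma pathM_det_even : ∀ m : ℕ, Even m → (pathM m).det = (-1 : ℚ) ^ (m / 2)
  | 0, _ => by simp [pathM]
  | 1, h => by simp at h
  | (m+2), h => by
    have hm : Even m := by rcases h with ⟨t, ht⟩; exact ⟨t-1, by omega⟩
    rw [pathM_succ_succ, pathM_det_even m hm]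
    have : (m + 2) / 2 = m / 2 + 1 := by omega
    rw [this, pow_succ]
    ring

/-- the vector solving `pathM m *ᵥ xvec m = svec m` for even `m`. -/
def xvec (m : ℕ) : Fin m → ℚ :=
  fun i => if Even (i : ℕ) then (-1) ^ ((m - 2 - (i : ℕ)) / 2) else (-1) ^ (((i : ℕ) - 1) / 2)

def svec (m : ℕ) : Fin m → ℚ :=
  fun i => if (i : ℕ) = 0 ∨ (i : ℕ) = m - 1 then 1 else 0

lemma sum_ite_val {m c : ℕ} (f : Fin m → ℚ) :
    (∑ j : Fin m, if (j : ℕ) = c then f j else 0) = if h : c < m then f ⟨c, h⟩ else 0 := by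
  by_cases h : c < m
  · rw [dif_pos h, Finset.sum_eq_single (⟨c, h⟩ : Fin m)]
    · simp
    · intro j _ hj
      rw [if_neg]
      intro hc
      exact hj (by ext; simp [hc])
    · simp
  · rw [dif_neg h]
    apply Finset.sum_eq_zero
    intro j _
    rw [if_neg]
    intro hc
    exact h (hc ▸ j.isLt)

lemma pathM_mulVec (m : ℕ) (hm : Even m) (h0 : 0 < m) :
    pathM m *ᵥ xvec m = svec m := by
  funext i
  have key : (pathM m *ᵥ xvec m) i =
      (if h : (i : ℕ) + 1 < m then xvec m ⟨(i:ℕ)+1, h⟩ else 0) +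
      (if h : (i : ℕ) - 1 < m ∧ 1 ≤ (i : ℕ) then xvec m ⟨(i:ℕ)-1, h.1⟩ else 0) := by
    rw [Matrix.mulVec, dotProduct]
    have : ∀ j : Fin m, pathM m i j * xvec m j =
        (if (j:ℕ) = (i:ℕ)+1 then xvec m j else 0) +
        (if (j:ℕ) = (i:ℕ)-1 ∧ 1 ≤ (i:ℕ) then xvec m j else 0) := by
      intro j
      simp only [pathM, Matrix.of_apply]
      by_cases h1 : (i:ℕ) + 1 = (j:ℕ)
      · rw [if_pos (Or.inl h1), if_pos h1.symm, if_neg (by omega), one_mul, add_zero]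
      · by_cases h2 : (j:ℕ) + 1 = (i:ℕ)
        · rw [if_pos (Or.inr h2), if_neg (by omega), if_pos (by omega), one_mul, zero_add]
        · rw [if_neg (by tauto), if_neg (by omega), if_neg (by omega), zero_mul, add_zero]
    rw [Finset.sum_congr rfl (fun j _ => this j), Finset.sum_add_distrib]
    congr 1
    · exact sum_ite_val _
    · by_cases hi : 1 ≤ (i : ℕ)
      · simp only [hi, and_true]
        rw [sum_ite_val (f := fun j => xvec m j)]
      · rw [dif_neg (by omega)]
        apply Finset.sum_eq_zero
        intro j _
        rw [if_neg (by omega)]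
  rw [key]
  -- now case analysis
  rcases Nat.lt_or_ge (i : ℕ) 1 with hi0 | hi1
  · -- i = 0
    have hi : (i : ℕ) = 0 := by omega
    have h2 : 2 ≤ m := by rcases hm with ⟨t, ht⟩; omega
    rw [dif_pos (by omega), dif_neg (by omega)]
    simp only [svec, xvec, hi]
    norm_num
  · rcases Nat.lt_or_ge ((i : ℕ) + 1) m with him | him
    · -- interior
      rw [dif_pos him, dif_pos ⟨by omega, hi1⟩]
      have hne : ¬((i:ℕ) = 0 ∨ (i:ℕ) = m - 1) := by omega
      simp only [svec, if_neg hne]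
      by_cases hpar : Even ((i : ℕ))
      · -- i even, neighbors odd
        have ho1 : ¬ Even ((i:ℕ) + 1) := by simp [Nat.even_add_one, hpar]
        have ho2 : ¬ Even ((i:ℕ) - 1) := by
          rcases hpar with ⟨t, ht⟩; intro ⟨s, hs⟩; omega
        simp only [xvec, if_neg ho1, if_neg ho2]
        have e1 : ((i:ℕ) + 1 - 1) / 2 = (i:ℕ)/2 := by omega
        have e2 : ((i:ℕ) - 1 - 1) / 2 + 1 = (i:ℕ)/2 := by
          rcases hpar with ⟨t, ht⟩; omega
        rw [e1, ← e2, pow_succ]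
        ring
      · -- i odd, neighbors even
        have he1 : Even ((i:ℕ) + 1) := by simpa [Nat.even_add_one] using hpar
        have he2 : Even ((i:ℕ) - 1) := by
          rcases he1 with ⟨t, ht⟩; exact ⟨t-1, by omega⟩
        simp only [xvec, if_pos he1, if_pos he2]
        have e2 : (m - 2 - ((i:ℕ) + 1)) / 2 + 1 = (m - 2 - ((i:ℕ) - 1)) / 2 := by
          rcases hm with ⟨t, ht⟩; rcases he1 with ⟨s, hs⟩; omega
        rw [← e2, pow_succ]
        ring
    · -- i = m - 1
      have hi : (i : ℕ) = m - 1 := by have := i.isLt; omega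
      have h2 : 2 ≤ m := by rcases hm with ⟨t, ht⟩; omega
      rw [dif_neg (by omega), dif_pos ⟨by omega, hi1⟩]
      have hpar : Even ((i:ℕ) - 1) := by
        rcases hm with ⟨t, ht⟩; exact ⟨t-1, by omega⟩
      simp only [svec, xvec, hi, if_pos (Or.inr rfl)]
      rw [if_pos (by rcases hm with ⟨t,ht⟩; exact ⟨t-1, by omega⟩)]
      have : (m - 2 - (m - 1 - 1)) / 2 = 0 := by omega
      rw [this]
      norm_num

lemma sum_sx (m : ℕ) (hm : Even m) (h0 : 0 < m) :
    (∑ i : Fin m, svec m i * xvec m i) = -2 * (-1) ^ (m / 2) := by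
  have h2 : 2 ≤ m := by rcases hm with ⟨t, ht⟩; omega
  have : ∀ i : Fin m, svec m i * xvec m i =
      (if (i:ℕ) = 0 then xvec m i else 0) + (if (i:ℕ) = m - 1 then xvec m i else 0) := by
    intro i
    simp only [svec]
    by_cases hi0 : (i:ℕ) = 0
    · rw [if_pos (Or.inl hi0), if_pos hi0, if_neg (by omega), one_mul, add_zero]
    · by_cases him : (i:ℕ) = m - 1
      · rw [if_pos (Or.inr him), if_neg hi0, if_pos him, one_mul, zero_add]
      · rw [if_neg (by tauto), zero_mul, if_neg hi0, if_neg him, add_zero]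
  rw [Finset.sum_congr rfl (fun i _ => this i), Finset.sum_add_distrib,
    sum_ite_val (f := fun j => xvec m j), sum_ite_val (f := fun j => xvec m j),
    dif_pos h0, dif_pos (by omega : m - 1 < m)]
  have e0 : xvec m ⟨0, h0⟩ = (-1) ^ ((m-2)/2) := by
    simp [xvec]
  have e1 : xvec m ⟨m-1, by omega⟩ = (-1) ^ ((m-2)/2) := by
    have hodd : ¬ Even ((⟨m-1, by omega⟩ : Fin m) : ℕ) := by
      simp only []
      rcases hm with ⟨t, ht⟩
      intro ⟨s, hs⟩; omega
    simp only [xvec, if_neg hodd]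
    have h' : m - 1 - 1 = m - 2 := by omega
    rw [h']
  rw [e0, e1]
  have : m / 2 = (m - 2) / 2 + 1 := by omega
  rw [this, pow_succ]
  ring

def wedgeM (m₁ m₂ : ℕ) : Matrix (Unit ⊕ (Fin m₁ ⊕ Fin m₂)) (Unit ⊕ (Fin m₁ ⊕ Fin m₂)) ℚ :=
  Matrix.fromBlocks 0 (Matrix.of fun _ j => Sum.elim (svec m₁) (svec m₂) j)
    (Matrix.of fun i _ => Sum.elim (svec m₁) (svec m₂) i)
    (Matrix.fromBlocks (pathM m₁) 0 0 (pathM m₂))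

lemma det_wedgeM (m₁ m₂ : ℕ) (h₁ : Even m₁) (h₂ : Even m₂) (p₁ : 0 < m₁) (p₂ : 0 < m₂) :
    (wedgeM m₁ m₂).det = 2 * ((-1) ^ (m₁ / 2) + (-1) ^ (m₂ / 2)) := by
  set D : Matrix (Fin m₁ ⊕ Fin m₂) (Fin m₁ ⊕ Fin m₂) ℚ :=
    Matrix.fromBlocks (pathM m₁) 0 0 (pathM m₂) with hD
  set B : Matrix Unit (Fin m₁ ⊕ Fin m₂) ℚ :=
    Matrix.of fun _ j => Sum.elim (svec m₁) (svec m₂) j with hB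
  set C : Matrix (Fin m₁ ⊕ Fin m₂) Unit ℚ :=
    Matrix.of fun i _ => Sum.elim (svec m₁) (svec m₂) i with hC
  have hDdet : D.det = (-1) ^ (m₁ / 2) * (-1) ^ (m₂ / 2) := by
    rw [hD, Matrix.det_fromBlocks_zero₂₁, pathM_det_even m₁ h₁, pathM_det_even m₂ h₂]
  have : Invertible D := by
    apply Matrix.invertibleOfIsUnitDet
    rw [hDdet, isUnit_iff_ne_zero]
    positivity
  set X : Matrix (Fin m₁ ⊕ Fin m₂) Unit ℚ :=
    Matrix.of fun i _ => Sum.elim (xvec m₁) (xvec m₂) i with hX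
  have hDX : D * X = C := by
    ext i j
    rcases i with i | i
    · have := congrFun (pathM_mulVec m₁ h₁ p₁) i
      rw [Matrix.mulVec, dotProduct] at this
      simp only [hD, hX, hC, Matrix.mul_apply, Fintype.sum_sum_type,
        Matrix.fromBlocks_apply₁₁, Matrix.fromBlocks_apply₁₂, Matrix.of_apply,
        Sum.elim_inl, Sum.elim_inr, Matrix.zero_apply, zero_mul, Finset.sum_const_zero, add_zero]
      exact this
    · have := congrFun (pathM_mulVec m₂ h₂ p₂) i
      rw [Matrix.mulVec, dotProduct] at this
      simp only [hD, hX, hC, Matrix.mul_apply, Fintype.sum_sum_type,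
        Matrix.fromBlocks_apply₂₁, Matrix.fromBlocks_apply₂₂, Matrix.of_apply,
        Sum.elim_inl, Sum.elim_inr, Matrix.zero_apply, zero_mul, Finset.sum_const_zero, zero_add]
      exact this
  have hinv : ⅟D * C = X := by
    rw [← hDX, ← Matrix.mul_assoc, invOf_mul_self' D, Matrix.one_mul]
  have hBX : (B * X) () () = -2 * (-1) ^ (m₁ / 2) + -2 * (-1) ^ (m₂ / 2) := by
    rw [Matrix.mul_apply]
    rw [Fintype.sum_sum_type]
    simp only [hB, hX, Matrix.of_apply, Sum.elim_inl, Sum.elim_inr]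
    rw [sum_sx m₁ h₁ p₁, sum_sx m₂ h₂ p₂]
  have : (wedgeM m₁ m₂).det = D.det * Matrix.det ((0 : Matrix Unit Unit ℚ) - B * ⅟D * C) := by
    rw [wedgeM, Matrix.det_fromBlocks₂₂]
  rw [this, Matrix.mul_assoc, hinv, hDdet]
  have hdet1 : Matrix.det ((0 : Matrix Unit Unit ℚ) - B * X) = -(B * X) () () := by
    rw [Matrix.det_unique]
    simp
  rw [hdet1, hBX]
  have ht₁ : ((-1:ℚ)) ^ (m₁/2) * ((-1:ℚ)) ^ (m₁/2) = 1 := by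
    rw [← pow_add]; exact Even.neg_one_pow ⟨m₁/2, rfl⟩
  have ht₂ : ((-1:ℚ)) ^ (m₂/2) * ((-1:ℚ)) ^ (m₂/2) = 1 := by
    rw [← pow_add]; exact Even.neg_one_pow ⟨m₂/2, rfl⟩
  linear_combination (2 * (-1:ℚ)^(m₂/2)) * ht₁ + (2 * (-1:ℚ)^(m₁/2)) * ht₂

namespace SimpleGraph.Walk
variable {V : Type*} {G : SimpleGraph V}

lemma support_eq_map_getVert {u v : V} (p : G.Walk u v) :
    p.support = (List.range (p.length + 1)).map p.getVert := by
  induction p with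
  | nil => simp [getVert]
  | cons h q ih =>
    rw [support_cons, ih]
    have hc : (cons h q).getVert ∘ Nat.succ = q.getVert :=
      funext fun i => getVert_cons_succ q h
    conv_rhs => rw [length_cons, List.range_succ_eq_map, List.map_cons, List.map_map, hc]
    rfl

lemma edges_eq_map_getVert {u v : V} (p : G.Walk u v) :
    p.edges = (List.range p.length).map (fun i => s(p.getVert i, p.getVert (i + 1))) := by
  induction p with
  | nil => simp
  | cons h q ih =>
    rw [edges_cons, ih]
    conv_rhs => rw [length_cons, List.range_succ_eq_map, List.map_cons, List.map_map]
    congr 1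
    rw [getVert_cons_succ, getVert_zero, getVert_zero]

lemma mem_edges_iff_getVert {u v : V} (p : G.Walk u v) (e : Sym2 V) :
    e ∈ p.edges ↔ ∃ i < p.length, e = s(p.getVert i, p.getVert (i + 1)) := by
  rw [edges_eq_map_getVert, List.mem_map]
  constructor
  · rintro ⟨i, hi, rfl⟩; exact ⟨i, List.mem_range.mp hi, rfl⟩
  · rintro ⟨i, hi, rfl⟩; exact ⟨i, List.mem_range.mpr hi, rfl⟩

lemma tail_support_eq_map_getVert {u v : V} (p : G.Walk u v) :
    p.support.tail = (List.range p.length).map (fun i => p.getVert (i + 1)) := by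
  rw [support_eq_map_getVert, List.range_succ_eq_map, List.map_cons, List.tail_cons,
    List.map_map]
  rfl

lemma length_rotate' [DecidableEq V] {u v : V} (c : G.Walk v v) (h : u ∈ c.support) :
    (c.rotate u h).length = c.length := by
  have h2 := congrArg Walk.length (c.take_spec h)
  rw [length_append] at h2
  unfold Walk.rotate
  rw [length_append]
  omega

lemma mem_support_rotate [DecidableEq V] {u v x : V} (c : G.Walk v v) (hn : 0 < c.length)
    (h : u ∈ c.support) : x ∈ (c.rotate u h).support ↔ x ∈ c.support := by
  have hclosed : ∀ (y : V) (d : G.Walk y y), 0 < d.length →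
      (x ∈ d.support ↔ x ∈ d.support.tail) := by
    intro y d hd
    constructor
    · intro hx
      rw [support_eq_cons] at hx
      rcases List.mem_cons.mp hx with rfl | hx
      · rw [tail_support_eq_map_getVert, List.mem_map]
        exact ⟨d.length - 1, List.mem_range.mpr (by omega),
          by rw [Nat.sub_add_cancel (by omega)]; exact d.getVert_length⟩
      · exact hx
    · intro hx
      rw [support_eq_cons]
      exact List.mem_cons_of_mem _ hx
  rw [hclosed u (c.rotate u h) (by rw [length_rotate']; exact hn),
    hclosed v c hn, (support_rotate c u h).mem_iff]

end SimpleGraph.Walk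

structure WedgeData {V : Type*} (G : SimpleGraph V) (k l : ℕ) (a b : ℕ → V) (w : V) : Prop where
  hk3 : 3 ≤ k
  hl3 : 3 ≤ l
  ha0 : a 0 = w
  hak : a k = w
  hb0 : b 0 = w
  hbl : b l = w
  ha_inj : ∀ i < k, ∀ j < k, a i = a j → i = j
  hb_inj : ∀ i < l, ∀ j < l, b i = b j → i = j
  hab : ∀ i < k, ∀ j < l, a i = b j → i = 0 ∧ j = 0
  hadj_a : ∀ i < k, G.Adj (a i) (a (i + 1))
  hadj_b : ∀ j < l, G.Adj (b j) (b (j + 1))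
  hchar : ∀ x y, G.Adj x y →
    (∃ i < k, s(x, y) = s(a i, a (i + 1))) ∨ (∃ j < l, s(x, y) = s(b j, b (j + 1)))

namespace WedgeData

variable {V : Type*} {G : SimpleGraph V} {k l : ℕ} {a b : ℕ → V} {w : V}
variable (h : WedgeData G k l a b w)
include h

lemma symm : WedgeData G l k b a w :=
  ⟨h.hl3, h.hk3, h.hb0, h.hbl, h.ha0, h.hak, h.hb_inj, h.ha_inj,
    fun j hj i hi he => (h.hab i hi j hj he.symm).symm,
    h.hadj_b, h.hadj_a, fun x y hxy => (h.hchar x y hxy).symm⟩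

lemma a_eq_a {s t : ℕ} (hs : s ≤ k) (ht : t ≤ k) (he : a s = a t) :
    s = t ∨ (s = 0 ∧ t = k) ∨ (s = k ∧ t = 0) := by
  rcases Nat.lt_or_ge s k with hs' | hs'
  · rcases Nat.lt_or_ge t k with ht' | ht'
    · exact Or.inl (h.ha_inj s hs' t ht' he)
    · have htk : t = k := by omega
      have h2 : a s = a 0 := by rw [he, htk, h.hak, h.ha0]
      have := h.ha_inj s hs' 0 (by omega) h2
      exact Or.inr (Or.inl ⟨this, htk⟩)
  · have hsk : s = k := by omega
    rcases Nat.lt_or_ge t k with ht' | ht'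
    · have h2 : a t = a 0 := by rw [← he, hsk, h.hak, h.ha0]
      have := h.ha_inj t ht' 0 (by omega) h2
      exact Or.inr (Or.inr ⟨hsk, this⟩)
    · exact Or.inl (by omega)

lemma a_ne_b {s t : ℕ} (h1 : 1 ≤ s) (hs : s < k) (ht : t ≤ l) : a s ≠ b t := by
  intro he
  rcases Nat.lt_or_ge t l with ht' | ht'
  · have := (h.hab s hs t ht' he).1
    omega
  · have htl : t = l := by omega
    subst htl
    have : a s = a 0 := he.trans (h.hbl.trans h.ha0.symm)
    have := h.ha_inj s hs 0 (by omega) this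
    omega

lemma adj_aa {i i' : ℕ} (hi : i + 1 < k) (hi' : i' + 1 < k) :
    G.Adj (a (i + 1)) (a (i' + 1)) ↔ (i + 2 = i' + 1 ∨ i' + 2 = i + 1) := by
  constructor
  · intro hadj
    rcases h.hchar _ _ hadj with ⟨t, ht, he⟩ | ⟨t, ht, he⟩
    · rw [Sym2.eq_iff] at he
      rcases he with ⟨h1, h2⟩ | ⟨h1, h2⟩
      · rcases h.a_eq_a (by omega) (by omega) h1 with h3 | h3 | h3 <;> try omega
        subst h3
        rcases h.a_eq_a (by omega) (by omega : i + 1 + 1 ≤ k) h2 with h4 | h4 | h4 <;> omega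
      · rcases h.a_eq_a (by omega) (by omega : t + 1 ≤ k) h1 with h3 | h3 | h3 <;> try omega
        have h3' : t = i := by omega
        rw [h3'] at h2
        rcases h.a_eq_a (by omega) (by omega : i ≤ k) h2 with h4 | h4 | h4 <;> omega
    · rw [Sym2.eq_iff] at he
      rcases he with ⟨h1, _⟩ | ⟨h1, _⟩
      · exact absurd h1 (h.a_ne_b (by omega) hi (by omega))
      · exact absurd h1 (h.a_ne_b (by omega) hi (by omega))
  · rintro (hc | hc)
    · have := h.hadj_a (i + 1) hi
      have he : i + 1 + 1 = i' + 1 := by omega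
      rwa [he] at this
    · have := h.hadj_a (i' + 1) hi'
      have he : i' + 1 + 1 = i + 1 := by omega
      rw [he] at this
      exact this.symm

lemma adj_wa {i : ℕ} (hi : i + 1 < k) : G.Adj w (a (i + 1)) ↔ (i = 0 ∨ i + 2 = k) := by
  constructor
  · intro hadj
    rcases h.hchar _ _ hadj with ⟨t, ht, he⟩ | ⟨t, ht, he⟩
    · rw [Sym2.eq_iff] at he
      rcases he with ⟨h1, h2⟩ | ⟨h1, h2⟩
      · rw [← h.ha0] at h1
        rcases h.a_eq_a (by omega) (by omega) h1 with h3 | h3 | h3 <;> try omega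
        subst h3
        rcases h.a_eq_a (by omega) (by omega : 0 + 1 ≤ k) h2 with h4 | h4 | h4 <;> omega
      · rw [← h.ha0] at h1
        rcases h.a_eq_a (by omega) (by omega : t + 1 ≤ k) h1 with h3 | h3 | h3 <;> try omega
        rcases h.a_eq_a (by omega) (by omega : t ≤ k) h2 with h4 | h4 | h4 <;> omega
    · rw [Sym2.eq_iff] at he
      rcases he with ⟨_, h2⟩ | ⟨_, h2⟩
      · exact absurd h2 (h.a_ne_b (by omega) hi (by omega))
      · exact absurd h2 (h.a_ne_b (by omega) hi (by omega))
  · rintro (hc | hc)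
    · subst hc
      have := h.hadj_a 0 (by omega)
      rwa [h.ha0] at this
    · have := h.hadj_a (i + 1) hi
      have he : i + 1 + 1 = k := by omega
      rw [he, h.hak] at this
      exact this.symm

lemma not_adj_ab {i j : ℕ} (hi : i + 1 < k) (hj : j + 1 < l) :
    ¬ G.Adj (a (i + 1)) (b (j + 1)) := by
  intro hadj
  rcases h.hchar _ _ hadj with ⟨t, ht, he⟩ | ⟨t, ht, he⟩
  · rw [Sym2.eq_iff] at he
    rcases he with ⟨h1, h2⟩ | ⟨h1, h2⟩
    · -- a (i+1) = a t, b (j+1) = a (t+1)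
      rcases Nat.lt_or_ge (t + 1) k with ht' | ht'
      · exact h.a_ne_b (by omega) ht' (by omega) h2.symm
      · have htk : t + 1 = k := by omega
        rw [htk, h.hak, ← h.hb0] at h2
        have := h.hb_inj 0 (by omega) (j + 1) (by omega) h2.symm
        omega
    · -- a (i+1) = a (t+1), b (j+1) = a t
      rcases Nat.eq_zero_or_pos t with rfl | ht0
      · rw [h.ha0, ← h.hb0] at h2
        have := h.hb_inj 0 (by omega) (j + 1) (by omega) h2.symm
        omega
      · exact h.a_ne_b (by omega) ht (by omega) h2.symm
  · rw [Sym2.eq_iff] at he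
    rcases he with ⟨h1, _⟩ | ⟨h1, _⟩
    · exact h.a_ne_b (by omega) hi (by omega) h1
    · exact h.a_ne_b (by omega) hi (by omega) h1

end WedgeData

open Matrix SimpleGraph Walk

theorem det_wedge_of_two_odd_cycles {V : Type*} [Fintype V] [DecidableEq V]
    (G : SimpleGraph V) [DecidableRel G.Adj]
    (k l : ℕ) (hk3 : 3 ≤ k) (hl3 : 3 ≤ l) (hko : Odd k) (hlo : Odd l)
    (hcard : Fintype.card V = k + l - 1)
    (u v : V) (c₁ : G.Walk u u) (c₂ : G.Walk v v)
    (hc₁ : c₁.IsCycle) (hc₂ : c₂.IsCycle)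
    (hlen₁ : c₁.length = k) (hlen₂ : c₂.length = l)
    (hshare : ∃! w : V, w ∈ c₁.support ∧ w ∈ c₂.support)
    (hvert : ∀ x : V, x ∈ c₁.support ∨ x ∈ c₂.support)
    (hedge : ∀ e ∈ G.edgeSet, e ∈ c₁.edges ∨ e ∈ c₂.edges) :
    (G.adjMatrix ℤ).det = 2 * (-1) ^ (l + k - 1) * ((-1) ^ ((l - 1) / 2 + 1) + (-1) ^ ((k - 1) / 2 + 1)) := by
  obtain ⟨w, ⟨hw1, hw2⟩, hwuniq⟩ := hshare
  set d₁ : G.Walk w w := c₁.rotate w hw1 with hd₁def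
  set d₂ : G.Walk w w := c₂.rotate w hw2 with hd₂def
  have hd₁ : d₁.IsCycle := hc₁.rotate hw1
  have hd₂ : d₂.IsCycle := hc₂.rotate hw2
  have hlen₁' : d₁.length = k := by rw [hd₁def, length_rotate', hlen₁]
  have hlen₂' : d₂.length = l := by rw [hd₂def, length_rotate', hlen₂]
  set a : ℕ → V := d₁.getVert with hadef
  set b : ℕ → V := d₂.getVert with hbdef
  have ha0 : a 0 = w := d₁.getVert_zero
  have hak : a k = w := by rw [hadef, ← hlen₁']; exact d₁.getVert_length
  have hb0 : b 0 = w := d₂.getVert_zero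
  have hbl : b l = w := by rw [hbdef, ← hlen₂']; exact d₂.getVert_length
  have hadj_a : ∀ i < k, G.Adj (a i) (a (i + 1)) := fun i hi =>
    d₁.adj_getVert_succ (by omega)
  have hadj_b : ∀ j < l, G.Adj (b j) (b (j + 1)) := fun j hj =>
    d₂.adj_getVert_succ (by omega)
  have hsucc_inj₁ : ∀ i < k, ∀ j < k, a (i + 1) = a (j + 1) → i = j := by
    have hnd := hd₁.support_nodup
    rw [tail_support_eq_map_getVert, hlen₁'] at hnd
    intro i hi j hj hij
    exact List.inj_on_of_nodup_map hnd (List.mem_range.mpr hi) (List.mem_range.mpr hj) hij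
  have hsucc_inj₂ : ∀ i < l, ∀ j < l, b (i + 1) = b (j + 1) → i = j := by
    have hnd := hd₂.support_nodup
    rw [tail_support_eq_map_getVert, hlen₂'] at hnd
    intro i hi j hj hij
    exact List.inj_on_of_nodup_map hnd (List.mem_range.mpr hi) (List.mem_range.mpr hj) hij
  have ha_inj : ∀ i < k, ∀ j < k, a i = a j → i = j := by
    intro i hi j hj hij
    rcases Nat.eq_zero_or_pos i with rfl | hi0
    · rcases Nat.eq_zero_or_pos j with rfl | hj0
      · rfl
      · have h1 : a ((k-1)+1) = a ((j-1)+1) := by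
          rw [Nat.sub_add_cancel (by omega), Nat.sub_add_cancel (by omega), hak, ← ha0, hij]
        have := hsucc_inj₁ (k-1) (by omega) (j-1) (by omega) h1
        omega
    · rcases Nat.eq_zero_or_pos j with rfl | hj0
      · have h1 : a ((i-1)+1) = a ((k-1)+1) := by
          rw [Nat.sub_add_cancel (by omega), Nat.sub_add_cancel (by omega), hak, ← ha0, ← hij]
        have := hsucc_inj₁ (i-1) (by omega) (k-1) (by omega) h1
        omega
      · have h1 : a ((i-1)+1) = a ((j-1)+1) := by
          rw [Nat.sub_add_cancel (by omega), Nat.sub_add_cancel (by omega), hij]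
        have := hsucc_inj₁ (i-1) (by omega) (j-1) (by omega) h1
        omega
  have hb_inj : ∀ i < l, ∀ j < l, b i = b j → i = j := by
    intro i hi j hj hij
    rcases Nat.eq_zero_or_pos i with rfl | hi0
    · rcases Nat.eq_zero_or_pos j with rfl | hj0
      · rfl
      · have h1 : b ((l-1)+1) = b ((j-1)+1) := by
          rw [Nat.sub_add_cancel (by omega), Nat.sub_add_cancel (by omega), hbl, ← hb0, hij]
        have := hsucc_inj₂ (l-1) (by omega) (j-1) (by omega) h1
        omega
    · rcases Nat.eq_zero_or_pos j with rfl | hj0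
      · have h1 : b ((i-1)+1) = b ((l-1)+1) := by
          rw [Nat.sub_add_cancel (by omega), Nat.sub_add_cancel (by omega), hbl, ← hb0, ← hij]
        have := hsucc_inj₂ (i-1) (by omega) (l-1) (by omega) h1
        omega
      · have h1 : b ((i-1)+1) = b ((j-1)+1) := by
          rw [Nat.sub_add_cancel (by omega), Nat.sub_add_cancel (by omega), hij]
        have := hsucc_inj₂ (i-1) (by omega) (j-1) (by omega) h1
        omega
  have hmem₁ : ∀ i ≤ k, a i ∈ c₁.support := by
    intro i hi
    have hmem : a i ∈ d₁.support := mem_support_iff_exists_getVert.mpr ⟨i, rfl, by omega⟩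
    rw [hd₁def] at hmem
    rwa [mem_support_rotate c₁ (by omega) hw1] at hmem
  have hmem₂ : ∀ j ≤ l, b j ∈ c₂.support := by
    intro j hj
    have hmem : b j ∈ d₂.support := mem_support_iff_exists_getVert.mpr ⟨j, rfl, by omega⟩
    rw [hd₂def] at hmem
    rwa [mem_support_rotate c₂ (by omega) hw2] at hmem
  have hab : ∀ i < k, ∀ j < l, a i = b j → i = 0 ∧ j = 0 := by
    intro i hi j hj hij
    have hxw : a i = w := hwuniq (a i) ⟨hmem₁ i (le_of_lt hi), by rw [hij]; exact hmem₂ j (by omega)⟩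
    constructor
    · exact ha_inj i hi 0 (by omega) (by rw [hxw, ha0])
    · exact hb_inj j hj 0 (by omega) (by rw [← hij, hxw, hb0])
  have hchar : ∀ x y, G.Adj x y →
      (∃ i < k, s(x, y) = s(a i, a (i + 1))) ∨ (∃ j < l, s(x, y) = s(b j, b (j + 1))) := by
    intro x y hxy
    rcases hedge s(x, y) ((SimpleGraph.mem_edgeSet G).mpr hxy) with he | he
    · left
      rw [← (rotate_edges c₁ w hw1).mem_iff] at he
      rw [mem_edges_iff_getVert, hlen₁'] at he
      exact he
    · right
      rw [← (rotate_edges c₂ w hw2).mem_iff] at he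
      rw [mem_edges_iff_getVert, hlen₂'] at he
      exact he
  have W : WedgeData G k l a b w :=
    ⟨hk3, hl3, ha0, hak, hb0, hbl, ha_inj, hb_inj, hab, hadj_a, hadj_b, hchar⟩
  -- the labeling bijection
  set g : (Unit ⊕ (Fin (k-1) ⊕ Fin (l-1))) → V :=
    Sum.elim (fun _ => w) (Sum.elim (fun i => a ((i : ℕ) + 1)) (fun j => b ((j : ℕ) + 1)))
    with hgdef
  have hginj : Function.Injective g := by
    intro x y hxy
    rcases x with _ | x | x <;> rcases y with _ | y | y <;>
      simp only [hgdef, Sum.elim_inl, Sum.elim_inr] at hxy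
    · rfl
    · have hy := y.isLt
      have := ha_inj 0 (by omega) ((y : ℕ) + 1) (by omega) (by rw [ha0, hxy])
      exact absurd this (by omega)
    · have hy := y.isLt
      have := hb_inj 0 (by omega) ((y : ℕ) + 1) (by omega) (by rw [hb0, hxy])
      exact absurd this (by omega)
    · have hx := x.isLt
      have := ha_inj ((x : ℕ) + 1) (by omega) 0 (by omega) (by rw [ha0, ← hxy])
      exact absurd this (by omega)
    · have hx := x.isLt
      have hy := y.isLt
      have := ha_inj ((x : ℕ) + 1) (by omega) ((y : ℕ) + 1) (by omega) hxy
      have hfin : x = y := Fin.ext (by omega)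
      rw [hfin]
    · have hx := x.isLt
      have hy := y.isLt
      have := hab ((x : ℕ) + 1) (by omega) ((y : ℕ) + 1) (by omega) hxy
      exact absurd this (by omega)
    · have hx := x.isLt
      have := hb_inj ((x : ℕ) + 1) (by omega) 0 (by omega) (by rw [hb0, ← hxy])
      exact absurd this (by omega)
    · have hx := x.isLt
      have hy := y.isLt
      have := hab ((y : ℕ) + 1) (by omega) ((x : ℕ) + 1) (by omega) hxy.symm
      exact absurd this (by omega)
    · have hx := x.isLt
      have hy := y.isLt
      have := hb_inj ((x : ℕ) + 1) (by omega) ((y : ℕ) + 1) (by omega) hxy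
      have hfin : x = y := Fin.ext (by omega)
      rw [hfin]
  have hcardI : Fintype.card (Unit ⊕ (Fin (k-1) ⊕ Fin (l-1))) = Fintype.card V := by
    simp only [Fintype.card_sum, Fintype.card_unit, Fintype.card_fin, hcard]
    omega
  set e : (Unit ⊕ (Fin (k-1) ⊕ Fin (l-1))) ≃ V :=
    Equiv.ofBijective g ((Fintype.bijective_iff_injective_and_card g).mpr ⟨hginj, hcardI⟩)
    with hedef
  have hex : ∀ z, e z = g z := fun z => rfl
  have hsub : (G.adjMatrix ℚ).submatrix e e = wedgeM (k-1) (l-1) := by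
    ext x y
    rcases x with _ | x | x <;> rcases y with _ | y | y <;>
      simp only [Matrix.submatrix_apply, hex, hgdef, Sum.elim_inl, Sum.elim_inr, wedgeM,
        Matrix.fromBlocks_apply₁₁, Matrix.fromBlocks_apply₁₂, Matrix.fromBlocks_apply₂₁,
        Matrix.fromBlocks_apply₂₂, Matrix.of_apply, Matrix.zero_apply, adjMatrix_apply, svec,
        pathM]
    · exact if_neg (SimpleGraph.irrefl G)
    · have hy := y.isLt
      exact if_congr ((W.adj_wa (by omega)).trans (by omega)) rfl rfl
    · have hy := y.isLt
      exact if_congr ((W.symm.adj_wa (by omega)).trans (by omega)) rfl rfl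
    · have hx := x.isLt
      exact if_congr ((G.adj_comm _ _).trans ((W.adj_wa (by omega)).trans (by omega))) rfl rfl
    · have hx := x.isLt
      have hy := y.isLt
      exact if_congr ((W.adj_aa (by omega) (by omega)).trans (by omega)) rfl rfl
    · have hx := x.isLt
      have hy := y.isLt
      exact if_neg (W.not_adj_ab (by omega) (by omega))
    · have hx := x.isLt
      exact if_congr ((G.adj_comm _ _).trans ((W.symm.adj_wa (by omega)).trans (by omega))) rfl rfl
    · have hx := x.isLt
      have hy := y.isLt
      exact if_neg (W.symm.not_adj_ab (by omega) (by omega))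
    · have hx := x.isLt
      have hy := y.isLt
      exact if_congr ((W.symm.adj_aa (by omega) (by omega)).trans (by omega)) rfl rfl
  have heven₁ : Even (k - 1) := by rcases hko with ⟨s, hs⟩; exact ⟨s, by omega⟩
  have heven₂ : Even (l - 1) := by rcases hlo with ⟨t, ht⟩; exact ⟨t, by omega⟩
  have hdetQ : (G.adjMatrix ℚ).det = 2 * ((-1) ^ ((k-1) / 2) + (-1) ^ ((l-1) / 2)) := by
    rw [← Matrix.det_submatrix_equiv_self e, hsub,
      det_wedgeM (k-1) (l-1) heven₁ heven₂ (by omega) (by omega)]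
  have hmap : (G.adjMatrix ℤ).map (Int.castRingHom ℚ) = G.adjMatrix ℚ := by
    ext x y
    simp [adjMatrix_apply, apply_ite]
  have hcast : ((G.adjMatrix ℤ).det : ℚ) = (G.adjMatrix ℚ).det := by
    rw [← hmap, ← RingHom.mapMatrix_apply, ← RingHom.map_det]
    rfl
  have hodd : Odd (l + k - 1) := by
    rcases hko with ⟨s, hs⟩; rcases hlo with ⟨t, ht⟩; exact ⟨t + s, by omega⟩
  have key : ((G.adjMatrix ℤ).det : ℚ) =
      ((2 * (-1) ^ (l + k - 1) * ((-1) ^ ((l - 1) / 2 + 1) + (-1) ^ ((k - 1) / 2 + 1)) : ℤ) : ℚ) := by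
    rw [hcast, hdetQ]
    push_cast
    rw [hodd.neg_one_pow, pow_succ, pow_succ]
    ring
  exact Int.cast_injective key
end
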